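/- arXiv:2307.15102 — 3 statements merged into one kernel-verified Lean document; each statement's English description precedes it below -/
import Mathlib

section
/- Let −∞ ≤ a < b ≤ ∞ and let I be one of the intervals (a,b), (a,b], [a,b), [a,b]. Let λ : I → ℂ and μ : I → ℝ be continuous with μ(t) ≥ 0 for all t ∈ I, and let A(t) be the upper-triangular matrix with diagonal entries λ(t), λ(t) and upper-right entry μ(t). Suppose that κ₂₁(t) := ∫_t^b (1 + ∫_t^s μ(τ) dτ) e^{−∫_t^s Re λ(τ) dτ} ds exists for all t ∈ I, that K₂₁ := sup_{t∈I} κ₂₁(t) < ∞, and that lim_{t→b⁻} ∫_{t₀}^t Re λ(s) ds = ∞ for t₀ ∈ (a,b). Then the system x' = A(t)x is Ulam stable on I (with respect to the maximum norm on ℂ²), and every Ulam constant K for x' = A(t)x on I satisfies K ≥ K₂₁. -/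
open MeasureTheory Filter Set

noncomputable section

/-- Ulam stability on `I` with constant `K` for the system `x' = A(t) x` on `ℂ²`,
with respect to the maximum norm (the sup norm on `Fin 2 → ℂ`). -/
def UlamStable2C (I : Set ℝ) (A : ℝ → Matrix (Fin 2) (Fin 2) ℂ) (K : ℝ) : Prop :=
  0 < K ∧
  ∀ ε : ℝ, 0 < ε →
    ∀ φ φd : ℝ → Fin 2 → ℂ,
      (∀ t ∈ I, HasDerivWithinAt φ (φd t) I t) →
      ContinuousOn φd I →
      (∀ t ∈ I, ‖φd t - (A t).mulVec (φ t)‖ ≤ ε) →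
      ∃ x : ℝ → Fin 2 → ℂ,
        (∀ t ∈ I, HasDerivWithinAt x ((A t).mulVec (x t)) I t) ∧
        ∀ t ∈ I, ‖φ t - x t‖ ≤ K * ε

/-- `κ₂₁(t) = ∫_t^b (1 + ∫_t^s μ) exp(-∫_t^s Re λ) ds` for real nonnegative `μ`. -/
def kappa21r (b : EReal) (l : ℝ → ℂ) (m : ℝ → ℝ) (t : ℝ) : ℝ :=
  ∫ s in {s : ℝ | t < s ∧ (s : EReal) < b},
    (1 + ∫ τ in t..s, m τ) * Real.exp (-∫ τ in t..s, (l τ).re)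

namespace St12

/-- The interval `(t, b)` as a subset of `ℝ`. -/
def Sb (b : EReal) (t : ℝ) : Set ℝ := {s : ℝ | t < s ∧ (s : EReal) < b}

lemma isOpen_Sb (b : EReal) (t : ℝ) : IsOpen (Sb b t) :=
  (isOpen_Ioi).inter (isOpen_Iio.preimage continuous_coe_real_ereal)
lemma measurableSet_Sb (b : EReal) (t : ℝ) : MeasurableSet (Sb b t) :=
  (isOpen_Sb b t).measurableSet
lemma Sb_subset_Sb (b : EReal) {t u : ℝ} (h : t ≤ u) : Sb b u ⊆ Sb b t :=
  fun _ hs => ⟨lt_of_le_of_lt h hs.1, hs.2⟩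

def Li (l : ℝ → ℂ) (t₀ t : ℝ) : ℂ := ∫ τ in t₀..t, l τ
def Mi (m : ℝ → ℝ) (t₀ t : ℝ) : ℝ := ∫ τ in t₀..t, m τ
def Ri (l : ℝ → ℂ) (t₀ t : ℝ) : ℝ := ∫ τ in t₀..t, (l τ).re
def ker (l : ℝ → ℂ) (m : ℝ → ℝ) (t₀ t s : ℝ) : ℝ :=
  (1 + (Mi m t₀ s - Mi m t₀ t)) * Real.exp (Ri l t₀ t - Ri l t₀ s)

lemma Ri_eq {l : ℝ → ℂ} {t₀ t : ℝ} (h : IntervalIntegrable l volume t₀ t) :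
    Ri l t₀ t = (Li l t₀ t).re := by
  have h1 : ∫ x in Ioc t₀ t, (l x).re ∂volume = (∫ x in Ioc t₀ t, l x ∂volume).re := by
    simpa [RCLike.re_to_complex] using integral_re h.1
  have h2 : ∫ x in Ioc t t₀, (l x).re ∂volume = (∫ x in Ioc t t₀, l x ∂volume).re := by
    simpa [RCLike.re_to_complex] using integral_re h.2
  simp only [Ri, Li, intervalIntegral, Complex.sub_re, h1, h2]

/-- Splitting of the integral over `(u, b)` at `v`. -/
lemma setIntegral_Sb_split {E : Type*} [NormedAddCommGroup E] [NormedSpace ℝ E]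
    {b : EReal} {g : ℝ → E} {u v : ℝ} (huv : u ≤ v) (hvb : (v : EReal) ≤ b)
    (hgi : IntegrableOn g (Sb b u)) :
    ∫ s in Sb b u, g s = (∫ s in u..v, g s) + ∫ s in Sb b v, g s := by
  have hIoo : Ioo u v ⊆ Sb b u := fun s hs =>
    ⟨hs.1, lt_of_lt_of_le (by exact_mod_cast hs.2) hvb⟩
  have hSv : Sb b v ⊆ Sb b u := Sb_subset_Sb b huv
  have hae : Sb b u =ᵐ[volume] (Ioo u v ∪ Sb b v : Set ℝ) := by
    rw [MeasureTheory.ae_eq_set]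
    constructor
    · refine measure_mono_null (fun s hs => ?_) (Real.volume_singleton (a := v))
      obtain ⟨⟨h1, h2⟩, h3⟩ := hs
      simp only [mem_singleton_iff]
      by_contra hne
      rcases lt_or_gt_of_ne hne with hlt | hgt
      · exact h3 (Or.inl ⟨h1, hlt⟩)
      · exact h3 (Or.inr ⟨hgt, h2⟩)
    · have : ((Ioo u v ∪ Sb b v) \ Sb b u : Set ℝ) = ∅ := by
        rw [diff_eq_empty]
        exact union_subset hIoo hSv
      simp [this]
  have hdisj : Disjoint (Ioo u v) (Sb b v) := by
    rw [Set.disjoint_left]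
    rintro s ⟨_, h2⟩ ⟨h3, _⟩
    exact absurd h2 (not_lt.mpr (le_of_lt h3))
  rw [setIntegral_congr_set hae,
    setIntegral_union hdisj (measurableSet_Sb b v)
      ((hgi.mono_set hIoo)) ((hgi.mono_set hSv)),
    intervalIntegral.integral_of_le huv, integral_Ioc_eq_integral_Ioo]

/-- `∫_{(t,b)} g = ∫_{(t₀,b)} g - ∫_{t₀}^{t} g`. -/
lemma setIntegral_Sb_eq {E : Type*} [NormedAddCommGroup E] [NormedSpace ℝ E]
    {b : EReal} {g : ℝ → E} {t₀ t : ℝ} (htb : (t : EReal) ≤ b) (ht₀b : (t₀ : EReal) ≤ b)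
    (hgi : IntegrableOn g (Sb b (min t₀ t))) :
    ∫ s in Sb b t, g s = (∫ s in Sb b t₀, g s) - ∫ s in t₀..t, g s := by
  rcases le_total t₀ t with h | h
  · rw [min_eq_left h] at hgi
    rw [setIntegral_Sb_split h htb hgi]
    abel
  · rw [min_eq_right h] at hgi
    rw [setIntegral_Sb_split h ht₀b hgi, intervalIntegral.integral_symm]
    abel

section ctx

variable {E : Type*} [NormedAddCommGroup E] [NormedSpace ℝ E] [CompleteSpace E]
variable {a b : EReal} {I : Set ℝ} {l : ℝ → ℂ} {m : ℝ → ℝ} {t₀ : ℝ}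
variable (hI1 : ∀ x : ℝ, a < (x : EReal) → (x : EReal) < b → x ∈ I)
variable (hI2 : ∀ x ∈ I, a ≤ (x : EReal) ∧ (x : EReal) ≤ b)

include hI1 hI2 in
lemma mem_I_of_between {t s u : ℝ} (ht : t ∈ I) (hs : s ∈ I) (h1 : t ≤ u) (h2 : u ≤ s) :
    u ∈ I := by
  rcases eq_or_lt_of_le h1 with rfl | h1'
  · exact ht
  rcases eq_or_lt_of_le h2 with rfl | h2'
  · exact hs
  refine hI1 u (lt_of_le_of_lt (hI2 t ht).1 ?_) (lt_of_lt_of_le ?_ (hI2 s hs).2)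
  · exact_mod_cast h1'
  · exact_mod_cast h2'

include hI1 hI2 in
lemma uIcc_subset_I {t s : ℝ} (ht : t ∈ I) (hs : s ∈ I) : Set.uIcc t s ⊆ I := by
  rcases le_total t s with h | h
  · rw [Set.uIcc_of_le h]; exact fun u hu => mem_I_of_between hI1 hI2 ht hs hu.1 hu.2
  · rw [Set.uIcc_of_ge h]; exact fun u hu => mem_I_of_between hI1 hI2 hs ht hu.1 hu.2

include hI1 hI2 in
lemma Sb_subset_I {t : ℝ} (ht : t ∈ I) : Sb b t ⊆ I := fun s hs =>
  hI1 s (lt_of_le_of_lt (hI2 t ht).1 (by exact_mod_cast hs.1)) hs.2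

include hI1 hI2 in
lemma exists_Icc_mem {t : ℝ} (ht : t ∈ I) :
    ∃ c d, c ∈ I ∧ d ∈ I ∧ c ≤ t ∧ t ≤ d ∧ Icc c d ∈ nhdsWithin t I := by
  have hright : ∃ d, d ∈ I ∧ t ≤ d ∧ ∃ vd, t < vd ∧ ∀ u ∈ I, u < vd → u ≤ d := by
    by_cases h : (t : EReal) < b
    · obtain ⟨r, hr1, hr2⟩ := EReal.exists_rat_btwn_of_lt h
      have htr : t < (r : ℝ) := by exact_mod_cast hr1
      exact ⟨r, hI1 r (lt_of_le_of_lt (hI2 t ht).1 hr1) hr2, le_of_lt htr, r, htr,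
        fun u _ hu => le_of_lt hu⟩
    · have hb : ∀ u ∈ I, u ≤ t := by
        intro u hu
        have h1 : (u : EReal) ≤ b := (hI2 u hu).2
        have h2 : b ≤ (t : EReal) := not_lt.mp h
        exact_mod_cast h1.trans h2
      exact ⟨t, ht, le_refl t, t + 1, by linarith, fun u hu _ => hb u hu⟩
  have hleft : ∃ c, c ∈ I ∧ c ≤ t ∧ ∃ vc, vc < t ∧ ∀ u ∈ I, vc < u → c ≤ u := by
    by_cases h : a < (t : EReal)
    · obtain ⟨r, hr1, hr2⟩ := EReal.exists_rat_btwn_of_lt h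
      have htr : (r : ℝ) < t := by exact_mod_cast hr2
      exact ⟨r, hI1 r hr1 (lt_of_lt_of_le hr2 (hI2 t ht).2), le_of_lt htr, r, htr,
        fun u _ hu => le_of_lt hu⟩
    · have hb : ∀ u ∈ I, t ≤ u := by
        intro u hu
        have h1 : a ≤ (u : EReal) := (hI2 u hu).1
        have h2 : (t : EReal) ≤ a := not_lt.mp h
        exact_mod_cast h2.trans h1
      exact ⟨t, ht, le_refl t, t - 1, by linarith, fun u hu _ => hb u hu⟩
  obtain ⟨d, hd, htd, vd, hvd, hPd⟩ := hright
  obtain ⟨c, hc, hct, vc, hvc, hPc⟩ := hleft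
  refine ⟨c, d, hc, hd, hct, htd, mem_nhdsWithin.2 ⟨Ioo vc vd, isOpen_Ioo, ⟨hvc, hvd⟩, ?_⟩⟩
  rintro u ⟨⟨h1, h2⟩, hu⟩
  exact ⟨hPc u hu h1, hPd u hu h2⟩

include hI1 hI2 in
lemma hasDerivWithinAt_primitive {g : ℝ → E} (hg : ContinuousOn g I) {t₀ t : ℝ}
    (ht₀ : t₀ ∈ I) (ht : t ∈ I) :
    HasDerivWithinAt (fun u => ∫ x in t₀..u, g x) (g t) I t := by
  obtain ⟨c, d, hc, hd, hct, htd, hmem⟩ := exists_Icc_mem hI1 hI2 ht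
  have hIcc : Icc c d ⊆ I := fun u hu => mem_I_of_between hI1 hI2 hc hd hu.1 hu.2
  have : Fact (t ∈ Icc c d) := ⟨⟨hct, htd⟩⟩
  have hint : IntervalIntegrable g volume t₀ t :=
    (hg.mono (uIcc_subset_I hI1 hI2 ht₀ ht)).intervalIntegrable
  have hmeas : StronglyMeasurableAtFilter g (nhdsWithin t (Icc c d)) volume :=
    ⟨Icc c d, self_mem_nhdsWithin, (hg.mono hIcc).aestronglyMeasurable measurableSet_Icc⟩
  have hcw : ContinuousWithinAt g (Icc c d) t := (hg.mono hIcc) t ⟨hct, htd⟩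
  exact (intervalIntegral.integral_hasDerivWithinAt_right hint hmeas hcw).mono_of_mem_nhdsWithin
    hmem

include hI1 hI2 in
lemma continuousOn_primitive {g : ℝ → E} (hg : ContinuousOn g I) {t₀ : ℝ} (ht₀ : t₀ ∈ I) :
    ContinuousOn (fun u => ∫ x in t₀..u, g x) I := fun t ht =>
  (hasDerivWithinAt_primitive hI1 hI2 hg ht₀ ht).continuousWithinAt

variable (hl : ContinuousOn l I) (hm : ContinuousOn m I) (hm0 : ∀ t ∈ I, 0 ≤ m t)
variable (ht₀I : t₀ ∈ I)

include hI1 hI2 hl in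
lemma intInt_l {t s : ℝ} (ht : t ∈ I) (hs : s ∈ I) : IntervalIntegrable l volume t s :=
  (hl.mono (uIcc_subset_I hI1 hI2 ht hs)).intervalIntegrable

include hI1 hI2 hm in
lemma intInt_m {t s : ℝ} (ht : t ∈ I) (hs : s ∈ I) : IntervalIntegrable m volume t s :=
  (hm.mono (uIcc_subset_I hI1 hI2 ht hs)).intervalIntegrable

include hI1 hI2 hl in
lemma intInt_rl {t s : ℝ} (ht : t ∈ I) (hs : s ∈ I) :
    IntervalIntegrable (fun τ => (l τ).re) volume t s :=
  ((Complex.continuous_re.comp_continuousOn hl).mono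
    (uIcc_subset_I hI1 hI2 ht hs)).intervalIntegrable

include hI1 hI2 hm ht₀I in
lemma Mi_diff {t s : ℝ} (ht : t ∈ I) (hs : s ∈ I) :
    Mi m t₀ s - Mi m t₀ t = ∫ τ in t..s, m τ := by
  have := intervalIntegral.integral_add_adjacent_intervals
    (intInt_m hI1 hI2 hm ht₀I ht) (intInt_m hI1 hI2 hm ht hs)
  simp only [Mi]
  linarith

include hI1 hI2 hl ht₀I in
lemma Ri_diff {t s : ℝ} (ht : t ∈ I) (hs : s ∈ I) :
    Ri l t₀ s - Ri l t₀ t = ∫ τ in t..s, (l τ).re := by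
  have := intervalIntegral.integral_add_adjacent_intervals
    (intInt_rl hI1 hI2 hl ht₀I ht) (intInt_rl hI1 hI2 hl ht hs)
  simp only [Ri]
  linarith

include hI1 hI2 hm hm0 ht₀I in
lemma Mi_mono {t s : ℝ} (ht : t ∈ I) (hs : s ∈ I) (hts : t ≤ s) :
    Mi m t₀ t ≤ Mi m t₀ s := by
  have h0 : 0 ≤ ∫ τ in t..s, m τ :=
    intervalIntegral.integral_nonneg hts
      (fun u hu => hm0 u (mem_I_of_between hI1 hI2 ht hs hu.1 hu.2))
  have := Mi_diff hI1 hI2 hm ht₀I ht hs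
  linarith

include hI1 hI2 hl hm ht₀I in
lemma kernel_eqOn {t : ℝ} (ht : t ∈ I) :
    EqOn (fun s => (1 + ∫ τ in t..s, m τ) * Real.exp (-∫ τ in t..s, (l τ).re))
      (ker l m t₀ t) (Sb b t) := by
  intro s hs
  have hsI : s ∈ I := Sb_subset_I hI1 hI2 ht hs
  simp only [ker, ← Mi_diff hI1 hI2 hm ht₀I ht hsI, ← Ri_diff hI1 hI2 hl ht₀I ht hsI]
  ring_nf

include hI1 hI2 hl hm ht₀I in
lemma kappa_eq {t : ℝ} (ht : t ∈ I) :
    kappa21r b l m t = ∫ s in Sb b t, ker l m t₀ t s := by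
  exact setIntegral_congr_fun (measurableSet_Sb b t) (kernel_eqOn hI1 hI2 hl hm ht₀I ht)

include hI1 hI2 hm hm0 ht₀I in
lemma ker_lb {t s : ℝ} (ht : t ∈ I) (hs : s ∈ Sb b t) :
    Real.exp (Ri l t₀ t - Ri l t₀ s) ≤ ker l m t₀ t s := by
  have hsI : s ∈ I := Sb_subset_I hI1 hI2 ht hs
  have h0 : Mi m t₀ t ≤ Mi m t₀ s := Mi_mono hI1 hI2 hm hm0 ht₀I ht hsI (le_of_lt hs.1)
  have hexp : 0 < Real.exp (Ri l t₀ t - Ri l t₀ s) := Real.exp_pos _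
  have h1 : 1 ≤ 1 + (Mi m t₀ s - Mi m t₀ t) := by linarith
  unfold ker
  nlinarith [Real.exp_pos (Ri l t₀ t - Ri l t₀ s)]

include hI1 hI2 hm hm0 ht₀I in
lemma ker_pos {t s : ℝ} (ht : t ∈ I) (hs : s ∈ Sb b t) : 0 < ker l m t₀ t s :=
  lt_of_lt_of_le (Real.exp_pos _) (ker_lb hI1 hI2 hm hm0 ht₀I ht hs)


def Mc (m : ℝ → ℝ) (t₀ t : ℝ) : ℂ := ∫ τ in t₀..t, (m τ : ℂ)

lemma Mc_eq (m : ℝ → ℝ) (t₀ t : ℝ) : Mc m t₀ t = (Mi m t₀ t : ℂ) :=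
  intervalIntegral.integral_ofReal

lemma mulVec2 (p q : ℂ) (v : Fin 2 → ℂ) :
    (!![p, q; 0, p]).mulVec v = ![p * v 0 + q * v 1, p * v 1] := by
  funext i
  fin_cases i <;>
    simp [Matrix.mulVec, dotProduct, Fin.sum_univ_two]

/-- The family of exact solutions. -/
def sol (l : ℝ → ℂ) (m : ℝ → ℝ) (t₀ : ℝ) (c : Fin 2 → ℂ) (t : ℝ) : Fin 2 → ℂ :=
  ![Complex.exp (Li l t₀ t) * (c 0 + Mc m t₀ t * c 1), Complex.exp (Li l t₀ t) * c 1]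

include hI1 hI2 hl hm ht₀I in
lemma sol_hasDeriv (c : Fin 2 → ℂ) {t : ℝ} (ht : t ∈ I) :
    HasDerivWithinAt (sol l m t₀ c)
      ((!![l t, (m t : ℂ); 0, l t]).mulVec (sol l m t₀ c t)) I t := by
  have hL : HasDerivWithinAt (fun u => Li l t₀ u) (l t) I t :=
    hasDerivWithinAt_primitive hI1 hI2 hl ht₀I ht
  have hM : HasDerivWithinAt (fun u => Mc m t₀ u) ((m t : ℂ)) I t :=
    hasDerivWithinAt_primitive hI1 hI2
      (Complex.continuous_ofReal.comp_continuousOn hm) ht₀I ht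
  have hE : HasDerivWithinAt (fun u => Complex.exp (Li l t₀ u))
      (Complex.exp (Li l t₀ t) * l t) I t := hL.cexp
  rw [mulVec2]
  rw [hasDerivWithinAt_pi]
  intro i
  fin_cases i
  · have h0 : HasDerivWithinAt (fun u => Complex.exp (Li l t₀ u) * (c 0 + Mc m t₀ u * c 1))
        (Complex.exp (Li l t₀ t) * l t * (c 0 + Mc m t₀ t * c 1)
          + Complex.exp (Li l t₀ t) * ((m t : ℂ) * c 1)) I t :=
      hE.mul ((hM.mul_const (c 1)).const_add (c 0))
    have : (fun u => sol l m t₀ c u 0)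
        = fun u => Complex.exp (Li l t₀ u) * (c 0 + Mc m t₀ u * c 1) := by
      funext u; simp [sol]
    rw [show ((0 : Fin 2) : Fin 2) = 0 from rfl]
    refine HasDerivWithinAt.congr_deriv (f' := ?_) ?_ ?_
    · exact Complex.exp (Li l t₀ t) * l t * (c 0 + Mc m t₀ t * c 1)
        + Complex.exp (Li l t₀ t) * ((m t : ℂ) * c 1)
    · exact this ▸ h0
    · simp [sol]; ring
  · have h1 : HasDerivWithinAt (fun u => Complex.exp (Li l t₀ u) * c 1)
        (Complex.exp (Li l t₀ t) * l t * c 1) I t := hE.mul_const (c 1)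
    have : (fun u => sol l m t₀ c u 1) = fun u => Complex.exp (Li l t₀ u) * c 1 := by
      funext u; simp [sol]
    refine HasDerivWithinAt.congr_deriv (f' := ?_) ?_ ?_
    · exact Complex.exp (Li l t₀ t) * l t * c 1
    · exact this ▸ h1
    · simp [sol]; ring

include hI1 hI2 in
lemma integral_eq_sub' {F f : ℝ → E} (hF : ∀ u ∈ I, HasDerivWithinAt F (f u) I u)
    (hf : ContinuousOn f I) {t₀ t : ℝ} (ht₀ : t₀ ∈ I) (ht : t ∈ I) :
    ∫ u in t₀..t, f u = F t - F t₀ := by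
  have key : ∀ p q : ℝ, p ∈ I → q ∈ I → p ≤ q → ∫ u in p..q, f u = F q - F p := by
    intro p q hp hq hpq
    have hIcc : Icc p q ⊆ I := fun u hu => mem_I_of_between hI1 hI2 hp hq hu.1 hu.2
    refine intervalIntegral.integral_eq_sub_of_hasDeriv_right_of_le hpq
      (fun u hu => ((hF u (hIcc hu)).continuousWithinAt).mono hIcc) ?_
      ((hf.mono (uIcc_subset_I hI1 hI2 hp hq)).intervalIntegrable)
    intro u hu
    have huI : u ∈ I := hIcc ⟨le_of_lt hu.1, le_of_lt hu.2⟩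
    refine (hF u huI).mono_of_mem_nhdsWithin ?_
    refine mem_of_superset (Ioc_mem_nhdsGT_of_mem ⟨le_refl u, hu.2⟩) ?_
    exact fun v hv => mem_I_of_between hI1 hI2 huI hq (le_of_lt hv.1) hv.2
  rcases le_total t₀ t with h | h
  · exact key t₀ t ht₀ ht h
  · rw [intervalIntegral.integral_symm, key t t₀ ht ht₀ h]
    abel


/-! ### The twisted perturbations -/

section gdefs

variable {f₀ f₁ : ℝ → ℂ} {ε : ℝ}
variable (hf₀c : ContinuousOn f₀ I) (hf₁c : ContinuousOn f₁ I)
variable (hf₀ : ∀ s ∈ I, ‖f₀ s‖ ≤ ε) (hf₁ : ∀ s ∈ I, ‖f₁ s‖ ≤ ε)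

include hI1 hI2 hl ht₀I in
lemma Li_cont : ContinuousOn (Li l t₀) I := continuousOn_primitive hI1 hI2 hl ht₀I

include hI1 hI2 hm ht₀I in
lemma Mc_cont : ContinuousOn (Mc m t₀) I :=
  continuousOn_primitive hI1 hI2 (Complex.continuous_ofReal.comp_continuousOn hm) ht₀I

include hI1 hI2 hl ht₀I in
lemma norm_exp_Li {s : ℝ} (hs : s ∈ I) :
    ‖Complex.exp (Li l t₀ s)‖ = Real.exp (Ri l t₀ s) := by
  rw [Complex.norm_exp, Ri_eq (intInt_l hI1 hI2 hl ht₀I hs)]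

include hI1 hI2 hl ht₀I in
lemma norm_exp_neg_Li {s : ℝ} (hs : s ∈ I) :
    ‖Complex.exp (-Li l t₀ s)‖ = Real.exp (-Ri l t₀ s) := by
  rw [Complex.norm_exp, Complex.neg_re,
    Ri_eq (intInt_l hI1 hI2 hl ht₀I hs)]

include hI1 hI2 hm ht₀I in
lemma norm_Mc_sub {t s : ℝ} (ht : t ∈ I) (hs : s ∈ I) :
    ‖Mc m t₀ t - Mc m t₀ s‖ = |Mi m t₀ t - Mi m t₀ s| := by
  rw [Mc_eq, Mc_eq, ← Complex.ofReal_sub, Complex.norm_real, Real.norm_eq_abs]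

include hI1 hI2 hl hm hm0 ht₀I hf₀ hf₁ in
lemma combo_bound (hε : 0 ≤ ε) {t s : ℝ} (ht : t ∈ I) (hs : s ∈ Sb b t) :
    ‖Complex.exp (Li l t₀ t) *
        (Complex.exp (-Li l t₀ s) * (f₀ s + (Mc m t₀ t - Mc m t₀ s) * f₁ s))‖
      ≤ ε * ker l m t₀ t s := by
  have hsI : s ∈ I := Sb_subset_I hI1 hI2 ht hs
  have hMts : Mi m t₀ t ≤ Mi m t₀ s := Mi_mono hI1 hI2 hm hm0 ht₀I ht hsI (le_of_lt hs.1)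
  have h1 : ‖f₀ s + (Mc m t₀ t - Mc m t₀ s) * f₁ s‖
      ≤ ε + (Mi m t₀ s - Mi m t₀ t) * ε := by
    refine le_trans (norm_add_le _ _) (add_le_add (hf₀ s hsI) ?_)
    rw [norm_mul, norm_Mc_sub hI1 hI2 hm ht₀I ht hsI, abs_sub_comm,
      abs_of_nonneg (by linarith)]
    exact mul_le_mul_of_nonneg_left (hf₁ s hsI) (by linarith)
  calc ‖Complex.exp (Li l t₀ t) *
        (Complex.exp (-Li l t₀ s) * (f₀ s + (Mc m t₀ t - Mc m t₀ s) * f₁ s))‖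
      = Real.exp (Ri l t₀ t) * (Real.exp (-Ri l t₀ s)
          * ‖f₀ s + (Mc m t₀ t - Mc m t₀ s) * f₁ s‖) := by
        rw [norm_mul, norm_mul, norm_exp_Li hI1 hI2 hl ht₀I ht,
          norm_exp_neg_Li hI1 hI2 hl ht₀I hsI]
    _ ≤ Real.exp (Ri l t₀ t) * (Real.exp (-Ri l t₀ s) * (ε + (Mi m t₀ s - Mi m t₀ t) * ε)) :=
        mul_le_mul_of_nonneg_left
          (mul_le_mul_of_nonneg_left h1 (Real.exp_pos _).le) (Real.exp_pos _).le
    _ = ε * ker l m t₀ t s := by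
        rw [ker, show Real.exp (Ri l t₀ t - Ri l t₀ s)
          = Real.exp (Ri l t₀ t) * Real.exp (-Ri l t₀ s) by rw [← Real.exp_add]; ring_nf]
        ring

include hI1 hI2 hl hm hm0 ht₀I hf₁ in
lemma g1_bound (hε : 0 ≤ ε) {t s : ℝ} (ht : t ∈ I) (hs : s ∈ Sb b t) :
    ‖Complex.exp (Li l t₀ t) * (Complex.exp (-Li l t₀ s) * f₁ s)‖
      ≤ ε * ker l m t₀ t s := by
  have hsI : s ∈ I := Sb_subset_I hI1 hI2 ht hs
  have h1 : ‖Complex.exp (Li l t₀ t) * (Complex.exp (-Li l t₀ s) * f₁ s)‖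
      ≤ Real.exp (Ri l t₀ t) * (Real.exp (-Ri l t₀ s) * ε) := by
    rw [norm_mul, norm_mul, norm_exp_Li hI1 hI2 hl ht₀I ht,
      norm_exp_neg_Li hI1 hI2 hl ht₀I hsI]
    exact mul_le_mul_of_nonneg_left
      (mul_le_mul_of_nonneg_left (hf₁ s hsI) (Real.exp_pos _).le) (Real.exp_pos _).le
  refine h1.trans ?_
  have h2 : Real.exp (Ri l t₀ t) * Real.exp (-Ri l t₀ s)
      = Real.exp (Ri l t₀ t - Ri l t₀ s) := by rw [← Real.exp_add]; ring_nf
  have h3 := ker_lb (l := l) hI1 hI2 hm hm0 ht₀I ht hs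
  have e3 := Real.exp_pos (Ri l t₀ t - Ri l t₀ s)
  nlinarith

variable (hker : ∀ t ∈ I, IntegrableOn
  (fun s => (1 + ∫ τ in t..s, m τ) * Real.exp (-∫ τ in t..s, (l τ).re)) (Sb b t))

include hI1 hI2 hl hm ht₀I hker in
lemma ker_int {t : ℝ} (ht : t ∈ I) : IntegrableOn (ker l m t₀ t) (Sb b t) :=
  (hker t ht).congr_fun (kernel_eqOn hI1 hI2 hl hm ht₀I ht) (measurableSet_Sb b t)

include hI1 hI2 hl hm hm0 ht₀I hker in
lemma kappa_nonneg {t : ℝ} (ht : t ∈ I) : 0 ≤ kappa21r b l m t := by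
  rw [kappa_eq hI1 hI2 hl hm ht₀I ht]
  exact setIntegral_nonneg (measurableSet_Sb b t)
    (fun s hs => (ker_pos hI1 hI2 hm hm0 ht₀I ht hs).le)

include hI1 hI2 hl hm hm0 ht₀I hf₀c hf₁c hf₀ hf₁ hker in
lemma g0_int (hε : 0 ≤ ε) {t : ℝ} (ht : t ∈ I) :
    IntegrableOn (fun s => Complex.exp (-Li l t₀ s) * (f₀ s + (Mc m t₀ t - Mc m t₀ s) * f₁ s))
      (Sb b t) := by
  have hcont : ContinuousOn
      (fun s => Complex.exp (-Li l t₀ s) * (f₀ s + (Mc m t₀ t - Mc m t₀ s) * f₁ s)) I :=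
    (((Li_cont hI1 hI2 hl ht₀I).neg.cexp).mul
      (hf₀c.add ((continuousOn_const.sub (Mc_cont hI1 hI2 hm ht₀I)).mul hf₁c)))
  refine Integrable.mono'
    (((ker_int hI1 hI2 hl hm ht₀I hker ht).const_mul (ε * Real.exp (-Ri l t₀ t))))
    ((hcont.mono (Sb_subset_I hI1 hI2 ht)).aestronglyMeasurable (measurableSet_Sb b t)) ?_
  rw [ae_restrict_iff' (measurableSet_Sb b t)]
  refine ae_of_all _ fun s hs => ?_
  have h := combo_bound hI1 hI2 hl hm hm0 ht₀I hf₀ hf₁ hε ht hs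
  rw [norm_mul, norm_exp_Li hI1 hI2 hl ht₀I ht] at h
  have e1 := Real.exp_pos (Ri l t₀ t)
  have e2 := Real.exp_pos (-Ri l t₀ t)
  have hh : Real.exp (-Ri l t₀ t) * Real.exp (Ri l t₀ t) = 1 := by
    rw [← Real.exp_add]; simp
  calc ‖Complex.exp (-Li l t₀ s) * (f₀ s + (Mc m t₀ t - Mc m t₀ s) * f₁ s)‖
      = Real.exp (-Ri l t₀ t) * (Real.exp (Ri l t₀ t)
          * ‖Complex.exp (-Li l t₀ s) * (f₀ s + (Mc m t₀ t - Mc m t₀ s) * f₁ s)‖) := by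
        rw [← mul_assoc, hh, one_mul]
    _ ≤ Real.exp (-Ri l t₀ t) * (ε * ker l m t₀ t s) := by nlinarith
    _ = ε * Real.exp (-Ri l t₀ t) * ker l m t₀ t s := by ring

include hI1 hI2 hl hm hm0 ht₀I hf₁c hf₁ hker in
lemma g1_int (hε : 0 ≤ ε) {t : ℝ} (ht : t ∈ I) :
    IntegrableOn (fun s => Complex.exp (-Li l t₀ s) * f₁ s) (Sb b t) := by
  have hcont : ContinuousOn (fun s => Complex.exp (-Li l t₀ s) * f₁ s) I :=
    ((Li_cont hI1 hI2 hl ht₀I).neg.cexp).mul hf₁c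
  refine Integrable.mono'
    (((ker_int hI1 hI2 hl hm ht₀I hker ht).const_mul (ε * Real.exp (-Ri l t₀ t))))
    ((hcont.mono (Sb_subset_I hI1 hI2 ht)).aestronglyMeasurable (measurableSet_Sb b t)) ?_
  rw [ae_restrict_iff' (measurableSet_Sb b t)]
  refine ae_of_all _ fun s hs => ?_
  have h := g1_bound hI1 hI2 hl hm hm0 ht₀I hf₁ hε ht hs
  rw [norm_mul, norm_exp_Li hI1 hI2 hl ht₀I ht] at h
  have e1 := Real.exp_pos (Ri l t₀ t)
  have e2 := Real.exp_pos (-Ri l t₀ t)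
  have hh : Real.exp (-Ri l t₀ t) * Real.exp (Ri l t₀ t) = 1 := by
    rw [← Real.exp_add]; simp
  calc ‖Complex.exp (-Li l t₀ s) * f₁ s‖
      = Real.exp (-Ri l t₀ t) * (Real.exp (Ri l t₀ t)
          * ‖Complex.exp (-Li l t₀ s) * f₁ s‖) := by rw [← mul_assoc, hh, one_mul]
    _ ≤ Real.exp (-Ri l t₀ t) * (ε * ker l m t₀ t s) := by nlinarith
    _ = ε * Real.exp (-Ri l t₀ t) * ker l m t₀ t s := by ring

end gdefs


include hI1 hI2 hl hm hm0 ht₀I in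
lemma approx_main
    (hker : ∀ t ∈ I, IntegrableOn
      (fun s => (1 + ∫ τ in t..s, m τ) * Real.exp (-∫ τ in t..s, (l τ).re)) (Sb b t))
    {ε : ℝ} (hε : 0 < ε) {φ φd : ℝ → Fin 2 → ℂ}
    (hφ : ∀ t ∈ I, HasDerivWithinAt φ (φd t) I t)
    (hφd : ContinuousOn φd I)
    (hball : ∀ t ∈ I, ‖φd t - (!![l t, (m t : ℂ); 0, l t]).mulVec (φ t)‖ ≤ ε) :
    ∃ c : Fin 2 → ℂ, ∀ t ∈ I, ‖φ t - sol l m t₀ c t‖ ≤ ε * kappa21r b l m t := by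
  classical
  have φc : ContinuousOn φ I := fun u hu => (hφ u hu).continuousWithinAt
  have φ0c : ContinuousOn (fun s => φ s 0) I := (continuous_apply 0).comp_continuousOn φc
  have φ1c : ContinuousOn (fun s => φ s 1) I := (continuous_apply 1).comp_continuousOn φc
  have φd0c : ContinuousOn (fun s => φd s 0) I := (continuous_apply 0).comp_continuousOn hφd
  have φd1c : ContinuousOn (fun s => φd s 1) I := (continuous_apply 1).comp_continuousOn hφd
  set f₀ : ℝ → ℂ := fun s => φd s 0 - (l s * φ s 0 + (m s : ℂ) * φ s 1) with hf₀def
  set f₁ : ℝ → ℂ := fun s => φd s 1 - l s * φ s 1 with hf₁def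
  have hcomp : ∀ s, (φd s - (!![l s, (m s : ℂ); 0, l s]).mulVec (φ s)) 0 = f₀ s
      ∧ (φd s - (!![l s, (m s : ℂ); 0, l s]).mulVec (φ s)) 1 = f₁ s := by
    intro s
    rw [mulVec2]
    constructor <;> simp [hf₀def, hf₁def]
  have hf₀ : ∀ s ∈ I, ‖f₀ s‖ ≤ ε := fun s hs => by
    rw [← (hcomp s).1]; exact (norm_le_pi_norm _ 0).trans (hball s hs)
  have hf₁ : ∀ s ∈ I, ‖f₁ s‖ ≤ ε := fun s hs => by
    rw [← (hcomp s).2]; exact (norm_le_pi_norm _ 1).trans (hball s hs)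
  have hf₀c : ContinuousOn f₀ I :=
    φd0c.sub ((hl.mul φ0c).add ((Complex.continuous_ofReal.comp_continuousOn hm).mul φ1c))
  have hf₁c : ContinuousOn f₁ I := φd1c.sub (hl.mul φ1c)
  set g₀ : ℝ → ℂ := fun s => Complex.exp (-Li l t₀ s) * (f₀ s - Mc m t₀ s * f₁ s) with hg₀def
  set g₁ : ℝ → ℂ := fun s => Complex.exp (-Li l t₀ s) * f₁ s with hg₁def
  set ψ₀ : ℝ → ℂ := fun t => Complex.exp (-Li l t₀ t) * (φ t 0 - Mc m t₀ t * φ t 1) with hψ₀def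
  set ψ₁ : ℝ → ℂ := fun t => Complex.exp (-Li l t₀ t) * φ t 1 with hψ₁def
  have hLd : ∀ t ∈ I, HasDerivWithinAt (Li l t₀) (l t) I t := fun t ht =>
    hasDerivWithinAt_primitive hI1 hI2 hl ht₀I ht
  have hMd : ∀ t ∈ I, HasDerivWithinAt (Mc m t₀) ((m t : ℂ)) I t := fun t ht =>
    hasDerivWithinAt_primitive hI1 hI2 (Complex.continuous_ofReal.comp_continuousOn hm) ht₀I ht
  have hg₀c : ContinuousOn g₀ I :=
    ((Li_cont hI1 hI2 hl ht₀I).neg.cexp).mul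
      (hf₀c.sub ((Mc_cont hI1 hI2 hm ht₀I).mul hf₁c))
  have hg₁c : ContinuousOn g₁ I := ((Li_cont hI1 hI2 hl ht₀I).neg.cexp).mul hf₁c
  have hψ₁d : ∀ t ∈ I, HasDerivWithinAt ψ₁ (g₁ t) I t := by
    intro t ht
    have h := (((hLd t ht).neg.cexp).mul (hasDerivWithinAt_pi.1 (hφ t ht) 1))
    convert h using 1
    · rfl
    · rfl
    simp only [hg₁def, hf₁def, Pi.neg_apply]
    ring
  have hψ₀d : ∀ t ∈ I, HasDerivWithinAt ψ₀ (g₀ t) I t := by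
    intro t ht
    have h := (((hLd t ht).neg.cexp).mul
      ((hasDerivWithinAt_pi.1 (hφ t ht) 0).sub
        ((hMd t ht).mul (hasDerivWithinAt_pi.1 (hφ t ht) 1))))
    convert h using 1
    · rfl
    · rfl
    simp only [hg₀def, hf₀def, hf₁def, Pi.neg_apply, Pi.sub_apply, Pi.mul_apply]
    ring
  have key₀ : ∀ t ∈ I, ∫ u in t₀..t, g₀ u = ψ₀ t - ψ₀ t₀ := fun t ht =>
    integral_eq_sub' hI1 hI2 hψ₀d hg₀c ht₀I ht
  have key₁ : ∀ t ∈ I, ∫ u in t₀..t, g₁ u = ψ₁ t - ψ₁ t₀ := fun t ht =>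
    integral_eq_sub' hI1 hI2 hψ₁d hg₁c ht₀I ht
  have hg1i : ∀ t ∈ I, IntegrableOn g₁ (Sb b t) := fun t ht =>
    g1_int hI1 hI2 hl hm hm0 ht₀I hf₁c hf₁ hker hε.le ht
  have hcombo_i : ∀ t ∈ I, IntegrableOn
      (fun s => Complex.exp (-Li l t₀ s) * (f₀ s + (Mc m t₀ t - Mc m t₀ s) * f₁ s))
      (Sb b t) := fun t ht =>
    g0_int hI1 hI2 hl hm hm0 ht₀I hf₀c hf₁c hf₀ hf₁ hker hε.le ht
  have hg0i : ∀ t ∈ I, IntegrableOn g₀ (Sb b t) := by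
    intro t ht
    have h : IntegrableOn (fun s =>
        Complex.exp (-Li l t₀ s) * (f₀ s + (Mc m t₀ t - Mc m t₀ s) * f₁ s)
          - Mc m t₀ t * g₁ s) (Sb b t) :=
      (hcombo_i t ht).sub ((hg1i t ht).const_mul (Mc m t₀ t))
    refine h.congr_fun (fun s _ => ?_) (measurableSet_Sb b t)
    simp only [hg₀def, hg₁def]
    ring
  set c₀ : ℂ := ψ₀ t₀ + ∫ s in Sb b t₀, g₀ s with hc₀def
  set c₁ : ℂ := ψ₁ t₀ + ∫ s in Sb b t₀, g₁ s with hc₁def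
  have hminI : ∀ t ∈ I, min t₀ t ∈ I := by
    intro t ht
    rcases le_total t₀ t with h | h
    · rwa [min_eq_left h]
    · rwa [min_eq_right h]
  have idA : ∀ t ∈ I, (∫ s in Sb b t, g₀ s) = c₀ - ψ₀ t := by
    intro t ht
    have hsplit := setIntegral_Sb_eq (b := b) (g := g₀) (hI2 t ht).2 (hI2 t₀ ht₀I).2
      (hg0i _ (hminI t ht))
    rw [hsplit, key₀ t ht, hc₀def]
    ring
  have idB : ∀ t ∈ I, (∫ s in Sb b t, g₁ s) = c₁ - ψ₁ t := by
    intro t ht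
    have hsplit := setIntegral_Sb_eq (b := b) (g := g₁) (hI2 t ht).2 (hI2 t₀ ht₀I).2
      (hg1i _ (hminI t ht))
    rw [hsplit, key₁ t ht, hc₁def]
    ring
  refine ⟨![c₀, c₁], fun t ht => ?_⟩
  have hkt : 0 ≤ kappa21r b l m t := kappa_nonneg hI1 hI2 hl hm hm0 ht₀I hker ht
  have hinv : Complex.exp (Li l t₀ t) * Complex.exp (-Li l t₀ t) = 1 := by
    rw [← Complex.exp_add]; simp
  have hIcombo : ∫ s in Sb b t, Complex.exp (Li l t₀ t) *
        (Complex.exp (-Li l t₀ s) * (f₀ s + (Mc m t₀ t - Mc m t₀ s) * f₁ s))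
      = Complex.exp (Li l t₀ t)
          * ((∫ s in Sb b t, g₀ s) + Mc m t₀ t * ∫ s in Sb b t, g₁ s) := by
    rw [show (fun s => Complex.exp (Li l t₀ t) *
          (Complex.exp (-Li l t₀ s) * (f₀ s + (Mc m t₀ t - Mc m t₀ s) * f₁ s)))
        = fun s => Complex.exp (Li l t₀ t) * (g₀ s + Mc m t₀ t * g₁ s) from
      funext fun s => by simp only [hg₀def, hg₁def]; ring]
    rw [MeasureTheory.integral_const_mul,
      integral_add (hg0i t ht) ((hg1i t ht).const_mul _), MeasureTheory.integral_const_mul]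
  have e0 : φ t 0 - sol l m t₀ ![c₀, c₁] t 0
      = -(∫ s in Sb b t, Complex.exp (Li l t₀ t) *
          (Complex.exp (-Li l t₀ s) * (f₀ s + (Mc m t₀ t - Mc m t₀ s) * f₁ s))) := by
    rw [hIcombo, idA t ht, idB t ht]
    have hsol : sol l m t₀ ![c₀, c₁] t 0
        = Complex.exp (Li l t₀ t) * (c₀ + Mc m t₀ t * c₁) := by simp [sol]
    rw [hsol]
    simp only [hψ₀def, hψ₁def]
    linear_combination (-(φ t 0) + Mc m t₀ t * φ t 1 - Mc m t₀ t * φ t 1) * hinv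
  have e1 : φ t 1 - sol l m t₀ ![c₀, c₁] t 1
      = -(∫ s in Sb b t, Complex.exp (Li l t₀ t) * (Complex.exp (-Li l t₀ s) * f₁ s)) := by
    have : ∫ s in Sb b t, Complex.exp (Li l t₀ t) * (Complex.exp (-Li l t₀ s) * f₁ s)
        = Complex.exp (Li l t₀ t) * ∫ s in Sb b t, g₁ s := by
      rw [← MeasureTheory.integral_const_mul]
    rw [this, idB t ht]
    have hsol : sol l m t₀ ![c₀, c₁] t 1 = Complex.exp (Li l t₀ t) * c₁ := by simp [sol]
    rw [hsol]
    simp only [hψ₁def]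
    linear_combination (-(φ t 1)) * hinv
  have hbd0 : ‖φ t 0 - sol l m t₀ ![c₀, c₁] t 0‖ ≤ ε * kappa21r b l m t := by
    rw [e0, norm_neg, kappa_eq hI1 hI2 hl hm ht₀I ht, ← MeasureTheory.integral_const_mul]
    refine norm_integral_le_of_norm_le
      ((ker_int hI1 hI2 hl hm ht₀I hker ht).const_mul ε) ?_
    rw [ae_restrict_iff' (measurableSet_Sb b t)]
    exact ae_of_all _ fun s hs =>
      combo_bound hI1 hI2 hl hm hm0 ht₀I hf₀ hf₁ hε.le ht hs
  have hbd1 : ‖φ t 1 - sol l m t₀ ![c₀, c₁] t 1‖ ≤ ε * kappa21r b l m t := by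
    rw [e1, norm_neg, kappa_eq hI1 hI2 hl hm ht₀I ht, ← MeasureTheory.integral_const_mul]
    refine norm_integral_le_of_norm_le
      ((ker_int hI1 hI2 hl hm ht₀I hker ht).const_mul ε) ?_
    rw [ae_restrict_iff' (measurableSet_Sb b t)]
    exact ae_of_all _ fun s hs =>
      g1_bound hI1 hI2 hl hm hm0 ht₀I hf₁ hε.le ht hs
  rw [pi_norm_le_iff_of_nonneg (mul_nonneg hε.le hkt)]
  intro i
  fin_cases i
  · exact hbd0
  · exact hbd1

/-! ### Part 2 machinery -/

/-- The filter of approach to `b` from the left, pulled back to `ℝ`. -/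
def Fb (b : EReal) : Filter ℝ := Filter.comap (fun x : ℝ => (x : EReal)) (nhdsWithin b (Iio b))

lemma Fb_neBot {b : EReal} {t₀ : ℝ} (ht₀b : (t₀ : EReal) < b) : (Fb b).NeBot := by
  rw [Fb, Filter.comap_neBot_iff]
  intro U hU
  obtain ⟨y, hy, hIoo⟩ := (mem_nhdsLT_iff_exists_Ioo_subset' ht₀b).mp hU
  obtain ⟨q, hq1, hq2⟩ := EReal.exists_rat_btwn_of_lt (show y < b from hy)
  exact ⟨(q : ℝ), hIoo ⟨hq1, hq2⟩⟩

include hI1 in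
lemma eventually_mem_Fb {u₀ : ℝ} (hau : a < (u₀ : EReal)) (hu₀b : (u₀ : EReal) < b) :
    ∀ᶠ t in Fb b, t ∈ I ∧ u₀ ≤ t := by
  have h1 : Ioi (u₀ : EReal) ∈ nhdsWithin b (Iio b) :=
    mem_nhdsWithin_of_mem_nhds (Ioi_mem_nhds hu₀b)
  have h2 : Iio b ∈ nhdsWithin b (Iio b) := self_mem_nhdsWithin
  have h3 : (fun x : ℝ => (x : EReal)) ⁻¹' (Ioi (u₀ : EReal) ∩ Iio b) ∈ Fb b := by
    rw [Fb]
    exact Filter.preimage_mem_comap (inter_mem h1 h2)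
  filter_upwards [h3] with t ht
  obtain ⟨ht1, ht2⟩ := ht
  simp only [mem_Ioi] at ht1
  have hu₀t : u₀ < t := by exact_mod_cast ht1
  exact ⟨hI1 t (lt_trans hau ht1) ht2, hu₀t.le⟩

include hI1 hI2 hl hm ht₀I in
lemma sol_unique {x : ℝ → Fin 2 → ℂ}
    (hx : ∀ t ∈ I, HasDerivWithinAt x ((!![l t, (m t : ℂ); 0, l t]).mulVec (x t)) I t) :
    ∃ c : Fin 2 → ℂ, ∀ t ∈ I, x t = sol l m t₀ c t := by
  have hconv : Convex ℝ I := convex_iff_ordConnected.mpr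
    ⟨fun p hp q hq u hu => mem_I_of_between hI1 hI2 hp hq hu.1 hu.2⟩
  have hconst : ∀ q : ℝ → ℂ, (∀ t ∈ I, HasDerivWithinAt q 0 I t) → ∀ t ∈ I, q t = q t₀ := by
    intro q hq t ht
    have := hconv.norm_image_sub_le_of_norm_hasFDerivWithin_le (C := 0)
      (f' := fun _ => ContinuousLinearMap.smulRight (1 : ℝ →L[ℝ] ℝ) (0 : ℂ))
      (fun u hu => (hq u hu).hasFDerivWithinAt)
      (fun u _ => le_of_eq (by simp)) ht₀I ht
    rw [← sub_eq_zero, ← norm_le_zero_iff]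
    simpa using this
  have hLd : ∀ t ∈ I, HasDerivWithinAt (Li l t₀) (l t) I t := fun t ht =>
    hasDerivWithinAt_primitive hI1 hI2 hl ht₀I ht
  have hMd : ∀ t ∈ I, HasDerivWithinAt (Mc m t₀) ((m t : ℂ)) I t := fun t ht =>
    hasDerivWithinAt_primitive hI1 hI2 (Complex.continuous_ofReal.comp_continuousOn hm) ht₀I ht
  have hx0d : ∀ t ∈ I, HasDerivWithinAt (fun u => x u 0)
      (l t * x t 0 + (m t : ℂ) * x t 1) I t := by
    intro t ht
    have h := hasDerivWithinAt_pi.1 (hx t ht) 0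
    rwa [mulVec2] at h
  have hx1d : ∀ t ∈ I, HasDerivWithinAt (fun u => x u 1) (l t * x t 1) I t := by
    intro t ht
    have h := hasDerivWithinAt_pi.1 (hx t ht) 1
    rwa [mulVec2] at h
  set q₁ : ℝ → ℂ := fun t => Complex.exp (-Li l t₀ t) * x t 1 with hq₁def
  have hq₁d : ∀ t ∈ I, HasDerivWithinAt q₁ 0 I t := by
    intro t ht
    have h := ((hLd t ht).neg.cexp).mul (hx1d t ht)
    convert h using 1
    · rfl
    · rfl
    ring
  have hq₁c : ∀ t ∈ I, q₁ t = q₁ t₀ := hconst q₁ hq₁d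
  set c₂ : ℂ := q₁ t₀ with hc₂def
  set q₀ : ℝ → ℂ := fun t => Complex.exp (-Li l t₀ t) * x t 0 - Mc m t₀ t * c₂ with hq₀def
  have hq₀d : ∀ t ∈ I, HasDerivWithinAt q₀ 0 I t := by
    intro t ht
    have h := (((hLd t ht).neg.cexp).mul (hx0d t ht)).sub ((hMd t ht).mul_const c₂)
    convert h using 1
    · rfl
    · rfl
    have hqc := hq₁c t ht
    simp only [hq₁def] at hqc
    simp only [Pi.neg_apply]
    linear_combination (-(m t : ℂ)) * hqc
  have hq₀c : ∀ t ∈ I, q₀ t = q₀ t₀ := hconst q₀ hq₀d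
  refine ⟨![q₀ t₀, c₂], fun t ht => ?_⟩
  have hinv : Complex.exp (Li l t₀ t) * Complex.exp (-Li l t₀ t) = 1 := by
    rw [← Complex.exp_add]; simp
  funext i
  fin_cases i
  · have hq := hq₀c t ht
    show x t 0 = sol l m t₀ ![q₀ t₀, c₂] t 0
    have hsol : sol l m t₀ ![q₀ t₀, c₂] t 0
        = Complex.exp (Li l t₀ t) * (q₀ t₀ + Mc m t₀ t * c₂) := by simp [sol]
    rw [hsol, ← hq]
    simp only [hq₀def]
    linear_combination (-(x t 0)) * hinv
  · have hq := hq₁c t ht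
    show x t 1 = sol l m t₀ ![q₀ t₀, c₂] t 1
    have hsol : sol l m t₀ ![q₀ t₀, c₂] t 1 = Complex.exp (Li l t₀ t) * c₂ := by simp [sol]
    rw [hsol, ← hq]
    simp only [hq₁def]
    linear_combination (-(x t 1)) * hinv


include hI1 hI2 hl hm hm0 ht₀I in
lemma tendsto_tail
    (hker : ∀ t ∈ I, IntegrableOn
      (fun s => (1 + ∫ τ in t..s, m τ) * Real.exp (-∫ τ in t..s, (l τ).re)) (Sb b t))
    {u₀ : ℝ} (hu₀I : u₀ ∈ I) (hau₀ : a < (u₀ : EReal)) (hu₀b : (u₀ : EReal) < b)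
    (ht₀u₀ : t₀ ≤ u₀) :
    Tendsto (fun t => ∫ s in Sb b t, ker l m t₀ t₀ s) (Fb b) (nhds 0) := by
  classical
  have ht₀b : (t₀ : EReal) < b := lt_of_le_of_lt (by exact_mod_cast ht₀u₀) hu₀b
  haveI hne : (Fb b).NeBot := Fb_neBot ht₀b
  haveI hcg : (Fb b).IsCountablyGenerated := Filter.comap.isCountablyGenerated _ _
  set k₀ : ℝ → ℝ := ker l m t₀ t₀ with hk₀def
  have hk₀int : IntegrableOn k₀ (Sb b t₀) := ker_int hI1 hI2 hl hm ht₀I hker ht₀I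
  have hk₀pos : ∀ s ∈ Sb b t₀, 0 < k₀ s := fun s hs =>
    ker_pos hI1 hI2 hm hm0 ht₀I ht₀I hs
  obtain ⟨u, hu⟩ := exists_seq_tendsto (Fb b)
  have hu' : Tendsto u atTop (Filter.comap (fun x : ℝ => (x : EReal)) (nhdsWithin b (Iio b))) :=
    hu
  have hcoe : Tendsto (fun n => ((u n : ℝ) : EReal)) atTop (nhdsWithin b (Iio b)) := by
    have := Filter.tendsto_comap_iff.mp hu'
    exact this
  have hev_n : ∀ᶠ n in atTop, u n ∈ I ∧ u₀ ≤ u n :=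
    hu.eventually (eventually_mem_Fb hI1 hau₀ hu₀b)
  have hev_b : ∀ᶠ n in atTop, ((u n : ℝ) : EReal) < b := by
    filter_upwards [hcoe.eventually_mem self_mem_nhdsWithin] with n hn
    exact hn
  have hDCT : Tendsto (fun n => ∫ s in Sb b t₀, (Sb b (u n)).indicator k₀ s) atTop (nhds 0) := by
    have h0 : (0 : ℝ) = ∫ s in Sb b t₀, (fun _ => (0 : ℝ)) s := by simp
    rw [h0]
    refine tendsto_integral_of_dominated_convergence (fun s => ‖k₀ s‖)
      (fun n => (hk₀int.aestronglyMeasurable).indicator (measurableSet_Sb b (u n)))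
      hk₀int.norm
      (fun n => ae_of_all _ fun s => norm_indicator_le_norm_self k₀ s) ?_
    rw [ae_restrict_iff' (measurableSet_Sb b t₀)]
    refine ae_of_all _ fun s hs => ?_
    have hevs : ∀ᶠ n in atTop, s < u n := by
      have hmem : Ioi (s : EReal) ∈ nhdsWithin b (Iio b) :=
        mem_nhdsWithin_of_mem_nhds (Ioi_mem_nhds hs.2)
      filter_upwards [hcoe.eventually_mem hmem] with n hn
      simp only [mem_Ioi] at hn
      exact_mod_cast hn
    refine Tendsto.congr' ?_ tendsto_const_nhds
    filter_upwards [hevs] with n hn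
    exact (indicator_of_notMem (fun hmem => absurd hmem.1 (not_lt.mpr hn.le)) k₀).symm
  rw [Metric.tendsto_nhds]
  intro δ hδ
  have hδev : ∀ᶠ n in atTop, dist (∫ s in Sb b t₀, (Sb b (u n)).indicator k₀ s) 0 < δ := by
    rw [Metric.tendsto_nhds] at hDCT
    exact hDCT δ hδ
  obtain ⟨n, ⟨hnI, hnu₀⟩, hnb, hnval⟩ := (hev_n.and (hev_b.and hδev)).exists
  set v : ℝ := u n with hvdef
  have ht₀v : t₀ ≤ v := le_trans ht₀u₀ hnu₀
  have hav : a < (v : EReal) := lt_of_lt_of_le hau₀ (by exact_mod_cast hnu₀)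
  have hTv : ∫ s in Sb b v, k₀ s = ∫ s in Sb b t₀, (Sb b v).indicator k₀ s := by
    rw [setIntegral_indicator (measurableSet_Sb b v),
      inter_eq_self_of_subset_right (Sb_subset_Sb b ht₀v)]
  filter_upwards [eventually_mem_Fb hI1 hav hnb] with t ht
  obtain ⟨htI, hvt⟩ := ht
  have ht₀t : t₀ ≤ t := le_trans ht₀v hvt
  have hTt_nonneg : 0 ≤ ∫ s in Sb b t, k₀ s :=
    setIntegral_nonneg (measurableSet_Sb b t)
      (fun s hs => (hk₀pos s (Sb_subset_Sb b ht₀t hs)).le)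
  have hTt_le : (∫ s in Sb b t, k₀ s) ≤ ∫ s in Sb b v, k₀ s := by
    refine setIntegral_mono_set (hk₀int.mono_set (Sb_subset_Sb b ht₀v)) ?_
      ((Sb_subset_Sb b hvt).eventuallyLE)
    rw [EventuallyLE, ae_restrict_iff' (measurableSet_Sb b v)]
    exact ae_of_all _ fun s hs => (hk₀pos s (Sb_subset_Sb b ht₀v hs)).le
  rw [Real.dist_0_eq_abs] at hnval ⊢
  rw [← hTv] at hnval
  rw [abs_of_nonneg hTt_nonneg]
  calc (∫ s in Sb b t, k₀ s) ≤ ∫ s in Sb b v, k₀ s := hTt_le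
    _ ≤ |∫ s in Sb b v, k₀ s| := le_abs_self _
    _ < δ := hnval


include hI1 hI2 hl hm hm0 ht₀I in
lemma kappa_le_ulam
    (hker : ∀ t ∈ I, IntegrableOn
      (fun s => (1 + ∫ τ in t..s, m τ) * Real.exp (-∫ τ in t..s, (l τ).re)) (Sb b t))
    {u₀ : ℝ} (hu₀I : u₀ ∈ I) (hau₀ : a < (u₀ : EReal)) (hu₀b : (u₀ : EReal) < b)
    (ht₀u₀ : t₀ ≤ u₀) {K : ℝ}
    (hK : UlamStable2C I (fun t => !![l t, (m t : ℂ); 0, l t]) K)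
    (hRtend : Tendsto (fun t => Ri l t₀ t) (Fb b) atTop) :
    kappa21r b l m t₀ ≤ K := by
  classical
  obtain ⟨hKpos, hKulam⟩ := hK
  have ht₀b : (t₀ : EReal) < b := lt_of_le_of_lt (by exact_mod_cast ht₀u₀) hu₀b
  haveI hne : (Fb b).NeBot := Fb_neBot ht₀b
  have hRz : Ri l t₀ t₀ = 0 := intervalIntegral.integral_same
  have hMz : Mi m t₀ t₀ = 0 := intervalIntegral.integral_same
  have hLz : Li l t₀ t₀ = 0 := intervalIntegral.integral_same
  have hMcz : Mc m t₀ t₀ = 0 := intervalIntegral.integral_same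
  -- the unit perturbation
  set w : ℝ → ℂ := fun s => Complex.exp (Li l t₀ s - (Ri l t₀ s : ℂ)) with hwdef
  have hRicont : ContinuousOn (Ri l t₀) I :=
    continuousOn_primitive hI1 hI2 (Complex.continuous_re.comp_continuousOn hl) ht₀I
  have hwcont : ContinuousOn w I :=
    ((Li_cont hI1 hI2 hl ht₀I).sub
      (Complex.continuous_ofReal.comp_continuousOn hRicont)).cexp
  have hwnorm : ∀ s ∈ I, ‖w s‖ = 1 := by
    intro s hs
    rw [hwdef, Complex.norm_exp, Complex.sub_re, Complex.ofReal_re,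
      Ri_eq (intInt_l hI1 hI2 hl ht₀I hs), sub_self, Real.exp_zero]
  set f₀ : ℝ → ℂ := w with hf₀def
  set f₁ : ℝ → ℂ := fun s => -w s with hf₁def
  have hf₀ : ∀ s ∈ I, ‖f₀ s‖ ≤ 1 := fun s hs => (hwnorm s hs).le
  have hf₁ : ∀ s ∈ I, ‖f₁ s‖ ≤ 1 := fun s hs => by
    rw [hf₁def, norm_neg]; exact (hwnorm s hs).le
  have hf₀c : ContinuousOn f₀ I := hwcont
  have hf₁c : ContinuousOn f₁ I := hwcont.neg
  set g₀ : ℝ → ℂ := fun s => Complex.exp (-Li l t₀ s) * (f₀ s - Mc m t₀ s * f₁ s) with hg₀def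
  set g₁ : ℝ → ℂ := fun s => Complex.exp (-Li l t₀ s) * f₁ s with hg₁def
  have hg₀c : ContinuousOn g₀ I :=
    ((Li_cont hI1 hI2 hl ht₀I).neg.cexp).mul
      (hf₀c.sub ((Mc_cont hI1 hI2 hm ht₀I).mul hf₁c))
  have hg₁c : ContinuousOn g₁ I := ((Li_cont hI1 hI2 hl ht₀I).neg.cexp).mul hf₁c
  have hg1i : ∀ t ∈ I, IntegrableOn g₁ (Sb b t) := fun t ht =>
    g1_int hI1 hI2 hl hm hm0 ht₀I hf₁c hf₁ hker zero_le_one ht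
  have hcombo_i : ∀ t ∈ I, IntegrableOn
      (fun s => Complex.exp (-Li l t₀ s) * (f₀ s + (Mc m t₀ t - Mc m t₀ s) * f₁ s))
      (Sb b t) := fun t ht =>
    g0_int hI1 hI2 hl hm hm0 ht₀I hf₀c hf₁c hf₀ hf₁ hker zero_le_one ht
  have hg0i : ∀ t ∈ I, IntegrableOn g₀ (Sb b t) := by
    intro t ht
    have h : IntegrableOn (fun s =>
        Complex.exp (-Li l t₀ s) * (f₀ s + (Mc m t₀ t - Mc m t₀ s) * f₁ s)
          - Mc m t₀ t * g₁ s) (Sb b t) :=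
      (hcombo_i t ht).sub ((hg1i t ht).const_mul (Mc m t₀ t))
    refine h.congr_fun (fun s _ => ?_) (measurableSet_Sb b t)
    simp only [hg₀def, hg₁def]
    ring
  set p₀ : ℝ → ℂ := fun t => -∫ s in Sb b t, g₀ s with hp₀def
  set p₁ : ℝ → ℂ := fun t => -∫ s in Sb b t, g₁ s with hp₁def
  have hminI : ∀ t ∈ I, min t₀ t ∈ I := by
    intro t ht
    rcases le_total t₀ t with h | h
    · rwa [min_eq_left h]
    · rwa [min_eq_right h]
  have hp₀eq : ∀ t ∈ I, p₀ t = (-∫ s in Sb b t₀, g₀ s) + ∫ u in t₀..t, g₀ u := by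
    intro t ht
    simp only [hp₀def]
    rw [setIntegral_Sb_eq (hI2 t ht).2 (hI2 t₀ ht₀I).2 (hg0i _ (hminI t ht))]
    ring
  have hp₁eq : ∀ t ∈ I, p₁ t = (-∫ s in Sb b t₀, g₁ s) + ∫ u in t₀..t, g₁ u := by
    intro t ht
    simp only [hp₁def]
    rw [setIntegral_Sb_eq (hI2 t ht).2 (hI2 t₀ ht₀I).2 (hg1i _ (hminI t ht))]
    ring
  have hp₀d : ∀ t ∈ I, HasDerivWithinAt p₀ (g₀ t) I t := by
    intro t ht
    have hprim : HasDerivWithinAt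
        (fun u => (-∫ s in Sb b t₀, g₀ s) + ∫ x in t₀..u, g₀ x) (g₀ t) I t :=
      (hasDerivWithinAt_primitive hI1 hI2 hg₀c ht₀I ht).const_add _
    exact hprim.congr (fun y hy => hp₀eq y hy) (hp₀eq t ht)
  have hp₁d : ∀ t ∈ I, HasDerivWithinAt p₁ (g₁ t) I t := by
    intro t ht
    have hprim : HasDerivWithinAt
        (fun u => (-∫ s in Sb b t₀, g₁ s) + ∫ x in t₀..u, g₁ x) (g₁ t) I t :=
      (hasDerivWithinAt_primitive hI1 hI2 hg₁c ht₀I ht).const_add _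
    exact hprim.congr (fun y hy => hp₁eq y hy) (hp₁eq t ht)
  have hp₀c : ContinuousOn p₀ I := fun t ht => (hp₀d t ht).continuousWithinAt
  have hp₁c : ContinuousOn p₁ I := fun t ht => (hp₁d t ht).continuousWithinAt
  set φ : ℝ → Fin 2 → ℂ := fun t =>
    ![Complex.exp (Li l t₀ t) * (p₀ t + Mc m t₀ t * p₁ t),
      Complex.exp (Li l t₀ t) * p₁ t] with hφdef
  set φd : ℝ → Fin 2 → ℂ := fun t =>
    ![l t * φ t 0 + (m t : ℂ) * φ t 1 + w t, l t * φ t 1 - w t] with hφddef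
  have hφ0 : ∀ t, φ t 0 = Complex.exp (Li l t₀ t) * (p₀ t + Mc m t₀ t * p₁ t) := by
    intro t; simp only [hφdef, Matrix.cons_val_zero]
  have hφ1 : ∀ t, φ t 1 = Complex.exp (Li l t₀ t) * p₁ t := by
    intro t; simp only [hφdef, Matrix.cons_val_one, Matrix.head_cons, Matrix.cons_val_zero]
  have hinv : ∀ t : ℝ, Complex.exp (Li l t₀ t) * Complex.exp (-Li l t₀ t) = 1 := by
    intro t; rw [← Complex.exp_add]; simp
  have hLd : ∀ t ∈ I, HasDerivWithinAt (Li l t₀) (l t) I t := fun t ht =>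
    hasDerivWithinAt_primitive hI1 hI2 hl ht₀I ht
  have hMd : ∀ t ∈ I, HasDerivWithinAt (Mc m t₀) ((m t : ℂ)) I t := fun t ht =>
    hasDerivWithinAt_primitive hI1 hI2 (Complex.continuous_ofReal.comp_continuousOn hm) ht₀I ht
  have hφderiv : ∀ t ∈ I, HasDerivWithinAt φ (φd t) I t := by
    intro t ht
    rw [hasDerivWithinAt_pi]
    intro i
    fin_cases i
    · have h := (((hLd t ht).cexp).mul
        ((hp₀d t ht).add ((hMd t ht).mul (hp₁d t ht))))
      have heq : (fun u => φ u 0)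
          = fun u => Complex.exp (Li l t₀ u) * (p₀ u + Mc m t₀ u * p₁ u) :=
        funext fun u => hφ0 u
      rw [show ((⟨0, by norm_num⟩ : Fin 2)) = (0 : Fin 2) from rfl]
      rw [heq]
      convert h using 1
      · rfl
      · rfl
      rw [hφddef]
      simp only [Matrix.cons_val_zero, hφ0, hφ1]
      simp only [hg₀def, hg₁def, hf₀def, hf₁def, Pi.add_apply, Pi.mul_apply]
      linear_combination (-(w t)) * hinv t
    · have h := ((hLd t ht).cexp).mul (hp₁d t ht)
      have heq : (fun u => φ u 1) = fun u => Complex.exp (Li l t₀ u) * p₁ u :=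
        funext fun u => hφ1 u
      rw [show ((⟨1, by norm_num⟩ : Fin 2)) = (1 : Fin 2) from rfl]
      rw [heq]
      convert h using 1
      · rfl
      · rfl
      rw [hφddef]
      simp only [Matrix.cons_val_one, Matrix.head_cons, hφ1, Matrix.cons_val_zero]
      simp only [hg₁def, hf₁def]
      linear_combination (w t) * hinv t
  have hφc : ContinuousOn φ I := fun t ht => (hφderiv t ht).continuousWithinAt
  have hφ0c : ContinuousOn (fun t => φ t 0) I := (continuous_apply 0).comp_continuousOn hφc
  have hφ1c : ContinuousOn (fun t => φ t 1) I := (continuous_apply 1).comp_continuousOn hφc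
  have hφdc : ContinuousOn φd I := by
    intro t ht
    rw [continuousWithinAt_pi]
    intro i
    fin_cases i
    · have heq : (fun u => φd u 0)
          = fun u => l u * φ u 0 + (m u : ℂ) * φ u 1 + w u := by
        funext u; rw [hφddef]; simp
      rw [show ((⟨0, by norm_num⟩ : Fin 2)) = (0 : Fin 2) from rfl]
      exact ((((hl.mul hφ0c).add
        ((Complex.continuous_ofReal.comp_continuousOn hm).mul hφ1c)).add hwcont).congr
          (fun u _ => (congrFun heq u))) t ht
    · have heq : (fun u => φd u 1) = fun u => l u * φ u 1 - w u := by
        funext u; rw [hφddef]; simp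
      rw [show ((⟨1, by norm_num⟩ : Fin 2)) = (1 : Fin 2) from rfl]
      exact (((hl.mul hφ1c).sub hwcont).congr (fun u _ => (congrFun heq u))) t ht
  have hφbound : ∀ t ∈ I,
      ‖φd t - (!![l t, (m t : ℂ); 0, l t]).mulVec (φ t)‖ ≤ 1 := by
    intro t ht
    have hvec : φd t - (!![l t, (m t : ℂ); 0, l t]).mulVec (φ t) = ![w t, -w t] := by
      rw [mulVec2]
      funext i
      fin_cases i
      · simp only [hφddef, Fin.mk_zero, Fin.mk_one, Pi.sub_apply, Matrix.cons_val_zero]; ring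
      · simp only [hφddef, Fin.mk_zero, Fin.mk_one, Pi.sub_apply, Matrix.cons_val_one,
          Matrix.head_cons, Matrix.cons_val_zero]; ring
    rw [hvec, pi_norm_le_iff_of_nonneg zero_le_one]
    intro i
    fin_cases i
    · simpa using (hwnorm t ht).le
    · simp only [Matrix.cons_val_one, Matrix.head_cons, norm_neg]
      simpa using (hwnorm t ht).le
  obtain ⟨x, hxd, hxb⟩ := hKulam 1 one_pos φ φd hφderiv hφdc hφbound
  obtain ⟨c, hc⟩ := sol_unique hI1 hI2 hl hm ht₀I hxd
  have hexp0 : Tendsto (fun t => Real.exp (-Ri l t₀ t)) (Fb b) (nhds 0) :=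
    Real.tendsto_exp_atBot.comp (tendsto_neg_atBot_iff.mpr hRtend)
  have hT : Tendsto (fun t => ∫ s in Sb b t, ker l m t₀ t₀ s) (Fb b) (nhds 0) :=
    tendsto_tail hI1 hI2 hl hm hm0 ht₀I hker hu₀I hau₀ hu₀b ht₀u₀
  have hk₀int : IntegrableOn (ker l m t₀ t₀) (Sb b t₀) :=
    ker_int hI1 hI2 hl hm ht₀I hker ht₀I
  -- pointwise bound of the twisted perturbations by the kernel
  have hg₁norm : ∀ s ∈ I, ‖g₁ s‖ = Real.exp (-Ri l t₀ s) := by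
    intro s hs
    rw [hg₁def, norm_mul, norm_exp_neg_Li hI1 hI2 hl ht₀I hs, hf₁def, norm_neg,
      hwnorm s hs, mul_one]
  have hp₁bd : ∀ t ∈ I, t₀ ≤ t → ‖p₁ t‖ ≤ ∫ s in Sb b t, ker l m t₀ t₀ s := by
    intro t ht ht₀t
    simp only [hp₁def]
    rw [norm_neg]
    refine norm_integral_le_of_norm_le (hk₀int.mono_set (Sb_subset_Sb b ht₀t)) ?_
    rw [ae_restrict_iff' (measurableSet_Sb b t)]
    refine ae_of_all _ fun s hs => ?_
    have hs₀ : s ∈ Sb b t₀ := Sb_subset_Sb b ht₀t hs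
    have hsI : s ∈ I := Sb_subset_I hI1 hI2 ht₀I hs₀
    have h2 := ker_lb (l := l) hI1 hI2 hm hm0 ht₀I ht₀I hs₀
    rw [hRz, zero_sub] at h2
    rw [hg₁norm s hsI]
    exact h2
  have hp₀bd : ∀ t ∈ I, t₀ ≤ t →
      ‖p₀ t + Mc m t₀ t * p₁ t‖ ≤ ∫ s in Sb b t, ker l m t₀ t₀ s := by
    intro t ht ht₀t
    have hcombine : p₀ t + Mc m t₀ t * p₁ t
        = -∫ s in Sb b t, Complex.exp (-Li l t₀ s)
            * (f₀ s + (Mc m t₀ t - Mc m t₀ s) * f₁ s) := by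
      rw [show (fun s => Complex.exp (-Li l t₀ s)
            * (f₀ s + (Mc m t₀ t - Mc m t₀ s) * f₁ s))
          = fun s => g₀ s + Mc m t₀ t * g₁ s from
        funext fun s => by simp only [hg₀def, hg₁def]; ring]
      rw [integral_add (hg0i t ht) ((hg1i t ht).const_mul _),
        MeasureTheory.integral_const_mul]
      simp only [hp₀def, hp₁def]
      ring
    rw [hcombine, norm_neg]
    refine norm_integral_le_of_norm_le (hk₀int.mono_set (Sb_subset_Sb b ht₀t)) ?_
    rw [ae_restrict_iff' (measurableSet_Sb b t)]
    refine ae_of_all _ fun s hs => ?_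
    have hs₀ : s ∈ Sb b t₀ := Sb_subset_Sb b ht₀t hs
    have hsI : s ∈ I := Sb_subset_I hI1 hI2 ht₀I hs₀
    have hMt : 0 ≤ Mi m t₀ t := by
      have := Mi_mono hI1 hI2 hm hm0 ht₀I ht₀I ht ht₀t
      rwa [hMz] at this
    have hMts : Mi m t₀ t ≤ Mi m t₀ s :=
      Mi_mono hI1 hI2 hm hm0 ht₀I ht hsI (le_of_lt hs.1)
    have h1 : ‖f₀ s + (Mc m t₀ t - Mc m t₀ s) * f₁ s‖ ≤ 1 + (Mi m t₀ s - Mi m t₀ t) := by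
      refine le_trans (norm_add_le _ _) ?_
      rw [norm_mul, norm_Mc_sub hI1 hI2 hm ht₀I ht hsI, abs_sub_comm,
        abs_of_nonneg (by linarith)]
      have := hf₁ s hsI
      nlinarith [hwnorm s hsI, norm_nonneg (f₁ s)]
    have hexp := Real.exp_pos (-Ri l t₀ s)
    calc ‖Complex.exp (-Li l t₀ s) * (f₀ s + (Mc m t₀ t - Mc m t₀ s) * f₁ s)‖
        = Real.exp (-Ri l t₀ s) * ‖f₀ s + (Mc m t₀ t - Mc m t₀ s) * f₁ s‖ := by
          rw [norm_mul, norm_exp_neg_Li hI1 hI2 hl ht₀I hsI]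
      _ ≤ Real.exp (-Ri l t₀ s) * (1 + (Mi m t₀ s - Mi m t₀ t)) :=
          mul_le_mul_of_nonneg_left h1 hexp.le
      _ ≤ ker l m t₀ t₀ s := by
          rw [ker, hRz, hMz, zero_sub, sub_zero]
          nlinarith
  -- the two constants vanish
  have hx1 : ∀ t ∈ I, x t 1 = Complex.exp (Li l t₀ t) * c 1 := by
    intro t ht
    rw [hc t ht]
    simp [sol]
  have hx0 : ∀ t ∈ I, x t 0 = Complex.exp (Li l t₀ t) * (c 0 + Mc m t₀ t * c 1) := by
    intro t ht
    rw [hc t ht]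
    simp [sol]
  have hnormle : ∀ t ∈ I, ∀ i : Fin 2, ∀ z : ℂ,
      φ t i - x t i = Complex.exp (Li l t₀ t) * z →
      ‖z‖ ≤ K * Real.exp (-Ri l t₀ t) := by
    intro t ht i z hz
    have hb' : ‖φ t i - x t i‖ ≤ K := by
      have h1 : ‖(φ t - x t) i‖ ≤ ‖φ t - x t‖ := norm_le_pi_norm _ i
      rw [Pi.sub_apply] at h1
      have h2 := hxb t ht
      rw [mul_one] at h2
      exact h1.trans h2
    rw [hz, norm_mul, norm_exp_Li hI1 hI2 hl ht₀I ht] at hb'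
    have hE := Real.exp_pos (Ri l t₀ t)
    rw [Real.exp_neg]
    calc ‖z‖ = (Real.exp (Ri l t₀ t))⁻¹ * (Real.exp (Ri l t₀ t) * ‖z‖) := by
          field_simp
      _ ≤ (Real.exp (Ri l t₀ t))⁻¹ * K :=
          mul_le_mul_of_nonneg_left hb' (inv_nonneg.mpr hE.le)
      _ = K * (Real.exp (Ri l t₀ t))⁻¹ := mul_comm _ _
  have hlim0 : Tendsto
      (fun t => K * Real.exp (-Ri l t₀ t) + ∫ s in Sb b t, ker l m t₀ t₀ s)
      (Fb b) (nhds 0) := by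
    have h := (hexp0.const_mul K).add hT
    simpa using h
  have hc1 : c 1 = 0 := by
    have hev : ∀ᶠ t in Fb b,
        ‖c 1‖ ≤ K * Real.exp (-Ri l t₀ t) + ∫ s in Sb b t, ker l m t₀ t₀ s := by
      filter_upwards [eventually_mem_Fb hI1 hau₀ hu₀b] with t htm
      obtain ⟨htI, hu₀t⟩ := htm
      have ht₀t : t₀ ≤ t := le_trans ht₀u₀ hu₀t
      have hz : φ t 1 - x t 1 = Complex.exp (Li l t₀ t) * (p₁ t - c 1) := by
        rw [hx1 t htI, hφ1 t]; ring
      have h1 := hnormle t htI 1 _ hz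
      have h2 := hp₁bd t htI ht₀t
      calc ‖c 1‖ = ‖p₁ t - (p₁ t - c 1)‖ := by congr 1; ring
        _ ≤ ‖p₁ t‖ + ‖p₁ t - c 1‖ := norm_sub_le _ _
        _ ≤ _ := by linarith
    exact norm_le_zero_iff.mp (ge_of_tendsto hlim0 hev)
  have hc0 : c 0 = 0 := by
    have hev : ∀ᶠ t in Fb b,
        ‖c 0‖ ≤ K * Real.exp (-Ri l t₀ t) + ∫ s in Sb b t, ker l m t₀ t₀ s := by
      filter_upwards [eventually_mem_Fb hI1 hau₀ hu₀b] with t htm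
      obtain ⟨htI, hu₀t⟩ := htm
      have ht₀t : t₀ ≤ t := le_trans ht₀u₀ hu₀t
      have hz : φ t 0 - x t 0
          = Complex.exp (Li l t₀ t) * ((p₀ t + Mc m t₀ t * p₁ t) - c 0) := by
        rw [hx0 t htI, hφ0 t, hc1]; ring
      have h1 := hnormle t htI 0 _ hz
      have h2 := hp₀bd t htI ht₀t
      calc ‖c 0‖ = ‖(p₀ t + Mc m t₀ t * p₁ t) - ((p₀ t + Mc m t₀ t * p₁ t) - c 0)‖ := by
            congr 1; ring
        _ ≤ ‖p₀ t + Mc m t₀ t * p₁ t‖ + ‖(p₀ t + Mc m t₀ t * p₁ t) - c 0‖ := norm_sub_le _ _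
        _ ≤ _ := by linarith
    exact norm_le_zero_iff.mp (ge_of_tendsto hlim0 hev)
  -- evaluate at the base point
  have hEq : EqOn g₀ (fun s => ((ker l m t₀ t₀ s : ℝ) : ℂ)) (Sb b t₀) := by
    intro s hs
    have hsI : s ∈ I := Sb_subset_I hI1 hI2 ht₀I hs
    have hA : Complex.exp (-Li l t₀ s) * w s = ((Real.exp (-Ri l t₀ s) : ℝ) : ℂ) := by
      rw [show w s = Complex.exp (Li l t₀ s - (Ri l t₀ s : ℂ)) from rfl,
        ← Complex.exp_add, Complex.ofReal_exp]
      congr 1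
      push_cast
      ring
    simp only [hg₀def, hf₀def, hf₁def]
    calc Complex.exp (-Li l t₀ s) * (w s - Mc m t₀ s * (-w s))
        = (1 + Mc m t₀ s) * (Complex.exp (-Li l t₀ s) * w s) := by ring
      _ = ((((1 + Mi m t₀ s) * Real.exp (-Ri l t₀ s) : ℝ) : ℂ)) := by
          rw [hA, Mc_eq]; push_cast; ring
      _ = _ := by
          rw [ker, hRz, hMz]
          push_cast
          ring_nf
  have hφt₀ : φ t₀ 0 = -((kappa21r b l m t₀ : ℝ) : ℂ) := by
    have hint : ∫ s in Sb b t₀, g₀ s = ((kappa21r b l m t₀ : ℝ) : ℂ) := by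
      rw [setIntegral_congr_fun (measurableSet_Sb b t₀) hEq]
      have h := integral_ofReal (𝕜 := ℂ) (f := fun x => ker l m t₀ t₀ x)
        (μ := volume.restrict (Sb b t₀))
      rw [← kappa_eq hI1 hI2 hl hm ht₀I ht₀I] at h
      simpa using h
    rw [hφ0, hLz, hMcz]
    simp only [hp₀def, Complex.exp_zero, zero_mul, one_mul]
    rw [hint]
    ring
  have hxt₀ : x t₀ 0 = 0 := by
    rw [hx0 t₀ ht₀I, hc0, hc1]
    ring
  have hfin : ‖φ t₀ 0 - x t₀ 0‖ ≤ K := by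
    have h1 : ‖(φ t₀ - x t₀) 0‖ ≤ ‖φ t₀ - x t₀‖ := norm_le_pi_norm _ 0
    rw [Pi.sub_apply] at h1
    have h2 := hxb t₀ ht₀I
    rw [mul_one] at h2
    exact h1.trans h2
  rw [hxt₀, sub_zero, hφt₀, norm_neg, Complex.norm_real, Real.norm_eq_abs,
    abs_of_nonneg (kappa_nonneg hI1 hI2 hl hm hm0 ht₀I hker ht₀I)] at hfin
  exact hfin

end ctx

end St12

theorem statement12 (a b : EReal) (hab : a < b) (I : Set ℝ)
    (hI1 : ∀ x : ℝ, a < (x : EReal) → (x : EReal) < b → x ∈ I)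
    (hI2 : ∀ x ∈ I, a ≤ (x : EReal) ∧ (x : EReal) ≤ b)
    (l : ℝ → ℂ) (m : ℝ → ℝ) (hl : ContinuousOn l I) (hm : ContinuousOn m I)
    (hm0 : ∀ t ∈ I, 0 ≤ m t)
    (hker : ∀ t ∈ I, IntegrableOn
      (fun s => (1 + ∫ τ in t..s, m τ) * Real.exp (-∫ τ in t..s, (l τ).re))
      {s : ℝ | t < s ∧ (s : EReal) < b})
    (hbdd : BddAbove (kappa21r b l m '' I))
    (hlim : ∀ t₀ : ℝ, a < (t₀ : EReal) → (t₀ : EReal) < b →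
        Tendsto (fun t => ∫ s in t₀..t, (l s).re)
          (Filter.comap (fun x : ℝ => (x : EReal)) (nhdsWithin b (Iio b))) atTop) :
    UlamStable2C I (fun t => !![l t, (m t : ℂ); 0, l t]) (sSup (kappa21r b l m '' I)) ∧
    ∀ K : ℝ, UlamStable2C I (fun t => !![l t, (m t : ℂ); 0, l t]) K → sSup (kappa21r b l m '' I) ≤ K := by
  classical
  open St12 in
  obtain ⟨r, har, hrb⟩ := EReal.exists_rat_btwn_of_lt hab
  set t₀ : ℝ := ((r : ℚ) : ℝ) with ht₀def
  have ht₀I : t₀ ∈ I := hI1 _ har hrb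
  have hker' : ∀ t ∈ I, IntegrableOn
      (fun s => (1 + ∫ τ in t..s, m τ) * Real.exp (-∫ τ in t..s, (l τ).re)) (Sb b t) :=
    hker
  -- positivity of `κ` at `t₀`
  have hkpos : 0 < kappa21r b l m t₀ := by
    obtain ⟨r', hr1', hr2'⟩ := EReal.exists_rat_btwn_of_lt hrb
    have ht₀r' : t₀ < (r' : ℝ) := by exact_mod_cast hr1'
    rw [kappa_eq hI1 hI2 hl hm ht₀I ht₀I]
    rw [setIntegral_pos_iff_support_of_nonneg_ae ?nonneg (ker_int hI1 hI2 hl hm ht₀I hker' ht₀I)]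
    case nonneg =>
      show ∀ᵐ s ∂volume.restrict (Sb b t₀), (0:ℝ) ≤ St12.ker l m t₀ t₀ s
      rw [ae_restrict_iff' (measurableSet_Sb b t₀)]
      exact ae_of_all _ fun s hs => (ker_pos hI1 hI2 hm hm0 ht₀I ht₀I hs).le
    have hIoo : Ioo t₀ (r' : ℝ) ⊆ Function.support (ker l m t₀ t₀) ∩ Sb b t₀ := by
      intro s hs
      have hsS : s ∈ Sb b t₀ := ⟨hs.1, lt_trans (by exact_mod_cast hs.2) hr2'⟩
      exact ⟨ne_of_gt (ker_pos hI1 hI2 hm hm0 ht₀I ht₀I hsS), hsS⟩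
    calc (0 : ENNReal) < volume (Ioo t₀ (r' : ℝ)) := by
          rw [Real.volume_Ioo]
          simp only [ENNReal.ofReal_pos]
          linarith
      _ ≤ _ := measure_mono hIoo
  have hkmem : kappa21r b l m t₀ ∈ kappa21r b l m '' I := ⟨t₀, ht₀I, rfl⟩
  have hKpos : 0 < sSup (kappa21r b l m '' I) :=
    lt_of_lt_of_le hkpos (le_csSup hbdd hkmem)
  constructor
  · refine ⟨hKpos, ?_⟩
    intro ε hε φ φd hφ hφd hb'
    obtain ⟨c, hc⟩ := approx_main hI1 hI2 hl hm hm0 ht₀I hker' hε hφ hφd hb'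
    refine ⟨sol l m t₀ c, fun t ht => sol_hasDeriv hI1 hI2 hl hm ht₀I c ht, fun t ht => ?_⟩
    refine (hc t ht).trans ?_
    rw [mul_comm (sSup _) ε]
    exact mul_le_mul_of_nonneg_left (le_csSup hbdd ⟨t, ht, rfl⟩) hε.le
  · intro K hK
    refine csSup_le ⟨_, hkmem⟩ ?_
    rintro k ⟨t₁, ht₁I, rfl⟩
    by_cases hb1 : (t₁ : EReal) < b
    · have hu₀I : max t₀ t₁ ∈ I := by
        rcases le_total t₀ t₁ with h | h
        · rw [max_eq_right h]; exact ht₁I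
        · rw [max_eq_left h]; exact ht₀I
      have hau₀ : a < ((max t₀ t₁ : ℝ) : EReal) := by
        refine lt_of_lt_of_le har ?_
        exact_mod_cast le_max_left t₀ t₁
      have hu₀b : ((max t₀ t₁ : ℝ) : EReal) < b := by
        rcases le_total t₀ t₁ with h | h
        · rw [max_eq_right h]; exact hb1
        · rw [max_eq_left h]; exact hrb
      have hRtend : Tendsto (fun t => Ri l t₁ t) (Fb b) atTop := by
        have h1 := hlim t₀ har hrb
        have heq : (fun t => Ri l t₁ t₀ + ∫ s in t₀..t, (l s).re)
            =ᶠ[Fb b] fun t => Ri l t₁ t := by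
          filter_upwards [eventually_mem_Fb hI1 hau₀ hu₀b] with t htm
          obtain ⟨htI, _⟩ := htm
          exact intervalIntegral.integral_add_adjacent_intervals
            (intInt_rl hI1 hI2 hl ht₁I ht₀I) (intInt_rl hI1 hI2 hl ht₀I htI)
        exact Tendsto.congr' heq (tendsto_atTop_add_const_left _ _ h1)
      exact kappa_le_ulam hI1 hI2 hl hm hm0 ht₁I hker' hu₀I hau₀ hu₀b
        (le_max_right t₀ t₁) hK hRtend
    · have hempty : {s : ℝ | t₁ < s ∧ (s : EReal) < b} = ∅ := by
        ext s
        simp only [mem_setOf_eq, mem_empty_iff_false, iff_false, not_and]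
        intro hts
        refine not_lt.mpr (le_trans (not_lt.mp hb1) ?_)
        exact_mod_cast hts.le
      show kappa21r b l m t₁ ≤ K
      rw [kappa21r, hempty]
      simp only [MeasureTheory.Measure.restrict_empty, integral_zero_measure]
      exact hK.1.le
end
end

section
/- Let −∞ ≤ a < b ≤ ∞ and let I be one of the intervals (a,b), (a,b], [a,b), [a,b]. Let λ : I → ℂ and μ : I → ℝ be continuous with μ(t) ≥ 0 for all t ∈ I, and let A(t) be the upper-triangular matrix with diagonal entries λ(t), λ(t) and upper-right entry μ(t). Suppose that κ₂₂(t) := ∫_a^t (1 + ∫_s^t μ(τ) dτ) e^{∫_s^t Re λ(τ) dτ} ds exists for all t ∈ I, that K₂₂ := sup_{t∈I} κ₂₂(t) < ∞, and that lim_{t→a⁺} ∫_t^{t₀} Re λ(s) ds = −∞ for t₀ ∈ (a,b). Then the system x' = A(t)x is Ulam stable on I (with respect to the maximum norm on ℂ²), and every Ulam constant K for x' = A(t)x on I satisfies K ≥ K₂₂. -/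
open MeasureTheory Filter Set Topology

noncomputable section

/-- `κ₂₂(t) = ∫_a^t (1 + ∫_s^t μ) exp(∫_s^t Re λ) ds` for real nonnegative `μ`. -/
def kappa22r (a : EReal) (l : ℝ → ℂ) (m : ℝ → ℝ) (t : ℝ) : ℝ :=
  ∫ s in {s : ℝ | a < (s : EReal) ∧ s < t},
    (1 + ∫ τ in s..t, m τ) * Real.exp (∫ τ in s..t, (l τ).re)



namespace S13

/-- domain of integration -/
def Dom (a : EReal) (t : ℝ) : Set ℝ := {s : ℝ | a < (s : EReal) ∧ s < t}

lemma measurableSet_Dom (a : EReal) (t : ℝ) : MeasurableSet (Dom a t) := by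
  have : Dom a t = ((fun s : ℝ => (s : EReal)) ⁻¹' Ioi a) ∩ Iio t := by
    ext s; simp [Dom]
  rw [this]
  exact (continuous_coe_real_ereal.measurable measurableSet_Ioi).inter measurableSet_Iio

lemma Gdiff {E : Type*} [NormedAddCommGroup E] [NormedSpace ℝ E]
    {a : EReal} {g : ℝ → E} {u v : ℝ} (hau : a ≤ (u : EReal)) (huv : u ≤ v)
    (hint : IntegrableOn g (Dom a v)) :
    ∫ s in Dom a v, g s = (∫ s in Dom a u, g s) + ∫ s in u..v, g s := by
  set S : Set ℝ := {s : ℝ | a < (s : EReal)} ∩ Ico u v with hS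
  have hsub : S ⊆ Dom a v := fun s hs => ⟨hs.1, hs.2.2⟩
  have hsub' : Dom a u ⊆ Dom a v := fun s hs => ⟨hs.1, lt_of_lt_of_le hs.2 huv⟩
  have hunion : Dom a v = Dom a u ∪ S := by
    ext s
    constructor
    · rintro ⟨h1, h2⟩
      rcases lt_or_ge s u with h | h
      · exact Or.inl ⟨h1, h⟩
      · exact Or.inr ⟨h1, h, h2⟩
    · rintro (⟨h1, h2⟩ | ⟨h1, h2, h3⟩)
      · exact ⟨h1, lt_of_lt_of_le h2 huv⟩
      · exact ⟨h1, h3⟩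
  have hmeasS : MeasurableSet S :=
    (continuous_coe_real_ereal.measurable measurableSet_Ioi).inter measurableSet_Ico
  have hdisj : Disjoint (Dom a u) S := by
    rw [Set.disjoint_left]
    rintro s ⟨_, h2⟩ ⟨_, h3, _⟩
    exact absurd h2 (not_lt.2 h3)
  have h1 : ∫ s in Dom a v, g s = (∫ s in Dom a u, g s) + ∫ s in S, g s := by
    rw [hunion]
    exact setIntegral_union hdisj hmeasS (hint.mono_set hsub') (hint.mono_set hsub)
  have hae : S =ᵐ[volume] Ioo u v := by
    rw [MeasureTheory.ae_eq_set]
    constructor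
    · refine measure_mono_null (fun s hs => ?_) (measure_singleton u)
      rcases hs with ⟨⟨h1', h2', h3'⟩, h4⟩
      simp only [mem_Ioo, not_and, not_lt] at h4
      rcases eq_or_lt_of_le h2' with h | h
      · simpa using h.symm
      · exact absurd (h4 h) (not_le.2 h3')
    · refine measure_mono_null (fun s hs => ?_) (measure_singleton u)
      rcases hs with ⟨⟨h1', h2'⟩, h3⟩
      exfalso
      apply h3
      refine ⟨lt_of_le_of_lt hau ?_, le_of_lt h1', h2'⟩
      exact_mod_cast h1'
  rw [h1, setIntegral_congr_set hae, intervalIntegral.integral_of_le huv,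
    integral_Ioc_eq_integral_Ioo]


variable {a b : EReal} {I : Set ℝ}
variable (hI1 : ∀ x : ℝ, a < (x : EReal) → (x : EReal) < b → x ∈ I)
variable (hI2 : ∀ x ∈ I, a ≤ (x : EReal) ∧ (x : EReal) ≤ b)

include hI1 hI2 in
lemma uIcc_subset {x y : ℝ} (hx : x ∈ I) (hy : y ∈ I) : uIcc x y ⊆ I := by
  rintro z hz
  rw [mem_uIcc] at hz
  wlog h : x ≤ z ∧ z ≤ y generalizing x y
  · exact this hy hx hz.symm (hz.resolve_left h)
  obtain ⟨h1, h2⟩ := h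
  rcases eq_or_lt_of_le h1 with rfl | h1
  · exact hx
  rcases eq_or_lt_of_le h2 with rfl | h2
  · exact hy
  refine hI1 z ?_ ?_
  · exact lt_of_le_of_lt (hI2 x hx).1 (by exact_mod_cast h1)
  · exact lt_of_lt_of_le (by exact_mod_cast h2) (hI2 y hy).2

include hI1 hI2 in
lemma intervalIntegrable_of_contOn {E : Type*} [NormedAddCommGroup E] {g : ℝ → E}
    (hg : ContinuousOn g I) {x y : ℝ} (hx : x ∈ I) (hy : y ∈ I) :
    IntervalIntegrable g volume x y :=
  (hg.mono (uIcc_subset hI1 hI2 hx hy)).intervalIntegrable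

include hI1 hI2 in
/-- FTC: derivative within `I` of a primitive of a continuous function. -/
lemma ftc_within {E : Type*} [NormedAddCommGroup E] [NormedSpace ℝ E] [CompleteSpace E] {g : ℝ → E}
    (hg : ContinuousOn g I) {t₀ t : ℝ} (ht₀ : t₀ ∈ I) (ht : t ∈ I) :
    HasDerivWithinAt (fun u => ∫ x in t₀..u, g x) (g t) I t := by
  have hint : IntervalIntegrable g volume t₀ t := intervalIntegrable_of_contOn hI1 hI2 hg ht₀ ht
  have hIsplit : I = (I ∩ Iic t) ∪ (I ∩ Ici t) := by
    rw [← Set.inter_union_distrib_left]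
    simp [Set.Iic_union_Ici]
  have hsing : ∀ s : Set ℝ, s ⊆ {t} →
      HasDerivWithinAt (fun u => ∫ x in t₀..u, g x) (g t) s t := by
    intro s hs
    rw [hasDerivWithinAt_iff_tendsto_slope]
    have : s \ {t} = ∅ := by
      apply Set.eq_empty_of_subset_empty; intro z hz; exact absurd (hs hz.1) hz.2
    rw [this]
    simp [nhdsWithin_empty]
  have hright : HasDerivWithinAt (fun u => ∫ x in t₀..u, g x) (g t) (I ∩ Ici t) t := by
    rcases lt_or_ge (t : EReal) b with htb | htb
    · obtain ⟨d, hd1, hd2⟩ := EReal.exists_between_coe_real htb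
      have htd : t < d := by exact_mod_cast hd1
      have hIoo : Ioo t d ⊆ I := fun s hs =>
        hI1 s (lt_of_le_of_lt (hI2 t ht).1 (by exact_mod_cast hs.1)) (lt_trans (by exact_mod_cast hs.2) hd2)
      have hmem : Ioo t d ∈ 𝓝[>] t := by
        have := inter_mem (mem_nhdsWithin_of_mem_nhds (Iio_mem_nhds htd))
          (self_mem_nhdsWithin (a := t) (s := Ioi t))
        exact Filter.mem_of_superset this (by intro z hz; exact ⟨hz.2, hz.1⟩)
      have hcont : ContinuousWithinAt g (Ioi t) t :=
        ((hg.continuousWithinAt ht).mono hIoo).mono_of_mem_nhdsWithin hmem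
      have hmeas : StronglyMeasurableAtFilter g (𝓝[>] t) volume :=
        ⟨Ioo t d, hmem, ((hg.mono hIoo).aestronglyMeasurable measurableSet_Ioo)⟩
      exact (intervalIntegral.integral_hasDerivWithinAt_right hint hmeas hcont).mono
        Set.inter_subset_right
    · refine hsing _ ?_
      intro s hs
      have h1 : (s : EReal) ≤ b := (hI2 s hs.1).2
      have h2 : t ≤ s := hs.2
      have h3 : (s : EReal) ≤ (t : EReal) := le_trans h1 htb
      have h4 : s ≤ t := by exact_mod_cast h3
      simpa using le_antisymm h4 h2
  have hleft : HasDerivWithinAt (fun u => ∫ x in t₀..u, g x) (g t) (I ∩ Iic t) t := by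
    rcases lt_or_ge a (t : EReal) with hta | hta
    · obtain ⟨d, hd1, hd2⟩ := EReal.exists_between_coe_real hta
      have htd : d < t := by exact_mod_cast hd2
      have hIoc : Ioc d t ⊆ I := by
        rintro s ⟨h1, h2⟩
        rcases eq_or_lt_of_le h2 with rfl | h2
        · exact ht
        · exact hI1 s (lt_trans hd1 (by exact_mod_cast h1))
            (lt_of_lt_of_le (by exact_mod_cast h2) (hI2 t ht).2)
      have hmem : Ioc d t ∈ 𝓝[≤] t := by
        have := inter_mem (mem_nhdsWithin_of_mem_nhds (Ioi_mem_nhds htd))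
          (self_mem_nhdsWithin (a := t) (s := Iic t))
        exact Filter.mem_of_superset this (by intro z hz; exact ⟨hz.1, hz.2⟩)
      have hcont : ContinuousWithinAt g (Iic t) t :=
        ((hg.continuousWithinAt ht).mono hIoc).mono_of_mem_nhdsWithin hmem
      have hmeas : StronglyMeasurableAtFilter g (𝓝[≤] t) volume :=
        ⟨Ioc d t, hmem, ((hg.mono hIoc).aestronglyMeasurable measurableSet_Ioc)⟩
      exact (intervalIntegral.integral_hasDerivWithinAt_right hint hmeas hcont).mono
        Set.inter_subset_right
    · refine hsing _ ?_
      intro s hs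
      have h1 : a ≤ (s : EReal) := (hI2 s hs.1).1
      have h3 : (t : EReal) ≤ (s : EReal) := le_trans hta h1
      have h4 : t ≤ s := by exact_mod_cast h3
      simpa using le_antisymm hs.2 h4
  have := hleft.union hright
  rwa [← hIsplit] at this

variable {l : ℝ → ℂ} {m : ℝ → ℝ} {t₀ : ℝ}

/-- complex primitive of l -/
def Lam (l : ℝ → ℂ) (t₀ t : ℝ) : ℂ := ∫ s in t₀..t, l s

/-- real primitive of m -/
def Mm (m : ℝ → ℝ) (t₀ t : ℝ) : ℝ := ∫ s in t₀..t, m s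

include hI1 hI2 in
lemma lam_additive (hl : ContinuousOn l I) (ht₀ : t₀ ∈ I) {x y : ℝ} (hx : x ∈ I) (hy : y ∈ I) :
    ∫ s in x..y, l s = Lam l t₀ y - Lam l t₀ x := by
  have h1 := intervalIntegral.integral_add_adjacent_intervals
    (intervalIntegrable_of_contOn hI1 hI2 hl hx ht₀)
    (intervalIntegrable_of_contOn hI1 hI2 hl ht₀ hy)
  rw [Lam, Lam, ← h1, intervalIntegral.integral_symm]
  ring

include hI1 hI2 in
lemma mm_additive (hm : ContinuousOn m I) (ht₀ : t₀ ∈ I) {x y : ℝ} (hx : x ∈ I) (hy : y ∈ I) :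
    ∫ s in x..y, m s = Mm m t₀ y - Mm m t₀ x := by
  have h1 := intervalIntegral.integral_add_adjacent_intervals
    (intervalIntegrable_of_contOn hI1 hI2 hm hx ht₀)
    (intervalIntegrable_of_contOn hI1 hI2 hm ht₀ hy)
  rw [Mm, Mm, ← h1, intervalIntegral.integral_symm]
  ring

include hI1 hI2 in
lemma re_additive (hl : ContinuousOn l I) (ht₀ : t₀ ∈ I) {x y : ℝ} (hx : x ∈ I) (hy : y ∈ I) :
    ∫ s in x..y, (l s).re = (Lam l t₀ y).re - (Lam l t₀ x).re := by
  have h1 : ∫ s in x..y, (l s).re = Complex.reCLM (∫ s in x..y, l s) := by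
    rw [← Complex.reCLM.intervalIntegral_comp_comm
      (intervalIntegrable_of_contOn hI1 hI2 hl hx hy)]
    rfl
  rw [h1, lam_additive hI1 hI2 hl ht₀ hx hy]
  simp

include hI1 hI2 in
lemma contOn_Lam (hl : ContinuousOn l I) (ht₀ : t₀ ∈ I) : ContinuousOn (Lam l t₀) I :=
  fun t ht => (ftc_within hI1 hI2 hl ht₀ ht).continuousWithinAt

include hI1 hI2 in
lemma contOn_Mm (hm : ContinuousOn m I) (ht₀ : t₀ ∈ I) : ContinuousOn (Mm m t₀) I :=
  fun t ht => (ftc_within hI1 hI2 hm ht₀ ht).continuousWithinAt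

include hI2 in
lemma Dom_subset_I {t : ℝ} (ht : t ∈ I) (hI1 : ∀ x : ℝ, a < (x : EReal) → (x : EReal) < b → x ∈ I) :
    Dom a t ⊆ I := by
  rintro s ⟨h1, h2⟩
  exact hI1 s h1 (lt_of_lt_of_le (by exact_mod_cast h2) (hI2 t ht).2)

/-- the kappa function (same as kappa22r in the main file) -/
def kap (a : EReal) (l : ℝ → ℂ) (m : ℝ → ℝ) (t : ℝ) : ℝ :=
  ∫ s in Dom a t, (1 + ∫ τ in s..t, m τ) * Real.exp (∫ τ in s..t, (l τ).re)

section core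
variable (hl : ContinuousOn l I) (hm : ContinuousOn m I) (hm0 : ∀ t ∈ I, 0 ≤ m t)
variable (hker : ∀ t ∈ I, IntegrableOn
      (fun s => (1 + ∫ τ in s..t, m τ) * Real.exp (∫ τ in s..t, (l τ).re)) (Dom a t))

include hI1 hI2 hl hm hm0 hker in
lemma sol_spec (ht₀ : t₀ ∈ I)
    {ε : ℝ} (hε : 0 ≤ ε) {q : ℝ → Fin 2 → ℂ} (hq : ContinuousOn q I)
    (hqb : ∀ t ∈ I, ∀ i, ‖q t i‖ ≤ ε) :
    ∃ φ : ℝ → Fin 2 → ℂ,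
      (∀ t ∈ I, HasDerivWithinAt φ ((!![l t, (m t : ℂ); 0, l t]).mulVec (φ t) + q t) I t) ∧
      (∀ t ∈ I, ∀ i, ‖φ t i‖ ≤ ε * kap a l m t) ∧
      (∀ t ∈ I, φ t 0 = ∫ s in Dom a t, Complex.exp (Lam l t₀ t - Lam l t₀ s) *
          (q s 0 + ((Mm m t₀ t : ℂ) - (Mm m t₀ s : ℂ)) * q s 1)) := by
  set Λ : ℝ → ℂ := Lam l t₀ with hΛ
  set M : ℝ → ℝ := Mm m t₀ with hM
  set R : ℝ → ℝ := fun t => (Λ t).re with hR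
  set K : ℝ → ℝ → ℝ :=
    fun t s => (1 + ∫ τ in s..t, m τ) * Real.exp (∫ τ in s..t, (l τ).re) with hK
  -- continuity facts
  have hΛc : ContinuousOn Λ I := contOn_Lam hI1 hI2 hl ht₀
  have hMc : ContinuousOn M I := contOn_Mm hI1 hI2 hm ht₀
  have hq0 : ContinuousOn (fun s => q s 0) I := (continuous_apply 0).comp_continuousOn hq
  have hq1 : ContinuousOn (fun s => q s 1) I := (continuous_apply 1).comp_continuousOn hq
  have hexpc : ContinuousOn (fun s => Complex.exp (-Λ s)) I :=
    Complex.continuous_exp.comp_continuousOn hΛc.neg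
  set g0 : ℝ → ℂ := fun s => Complex.exp (-Λ s) * q s 0 with hg0
  set g1 : ℝ → ℂ := fun s => Complex.exp (-Λ s) * q s 1 with hg1
  set g2 : ℝ → ℂ := fun s => (M s : ℂ) * (Complex.exp (-Λ s) * q s 1) with hg2
  have hg0c : ContinuousOn g0 I := hexpc.mul hq0
  have hg1c : ContinuousOn g1 I := hexpc.mul hq1
  have hg2c : ContinuousOn g2 I :=
    (Complex.continuous_ofReal.comp_continuousOn hMc).mul (hexpc.mul hq1)
  -- pointwise facts on the domain
  have hDomI : ∀ {t : ℝ}, t ∈ I → Dom a t ⊆ I := fun {t} ht => Dom_subset_I hI2 ht hI1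
  have hKfacts : ∀ {t : ℝ}, t ∈ I → ∀ s ∈ Dom a t,
      K t s = (1 + (M t - M s)) * Real.exp (R t - R s) ∧ 0 ≤ M t - M s := by
    intro t ht s hs
    have hsI : s ∈ I := hDomI ht hs
    have hst : s ≤ t := le_of_lt hs.2
    have h1 : ∫ τ in s..t, m τ = M t - M s := mm_additive hI1 hI2 hm ht₀ hsI ht
    have h2 : ∫ τ in s..t, (l τ).re = R t - R s := re_additive hI1 hI2 hl ht₀ hsI ht
    have h3 : 0 ≤ ∫ τ in s..t, m τ := by
      apply intervalIntegral.integral_nonneg hst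
      intro u hu
      exact hm0 u (uIcc_subset hI1 hI2 hsI ht (by rw [uIcc_of_le hst]; exact hu))
    rw [h1] at h3
    refine ⟨?_, h3⟩
    show (1 + ∫ τ in s..t, m τ) * Real.exp (∫ τ in s..t, (l τ).re) = _
    rw [h1, h2]
  -- integrability
  have key : ∀ {t : ℝ}, t ∈ I → ∀ (f : ℝ → ℂ), ContinuousOn f I → ∀ C : ℝ,
      (∀ s ∈ Dom a t, ‖f s‖ ≤ C * K t s) → IntegrableOn f (Dom a t) := by
    intro t ht f hf C hC
    refine Integrable.mono' ((hker t ht).const_mul C)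
      ((hf.mono (hDomI ht)).aestronglyMeasurable (measurableSet_Dom a t)) ?_
    exact (ae_restrict_iff' (measurableSet_Dom a t)).2 (ae_of_all _ hC)
  have hKpos : ∀ {t : ℝ}, t ∈ I → ∀ s ∈ Dom a t, 0 < K t s := by
    intro t ht s hs
    obtain ⟨hKeq, hMst⟩ := hKfacts ht s hs
    rw [hKeq]
    positivity
  have hbound0 : ∀ {t : ℝ}, t ∈ I → ∀ s ∈ Dom a t,
      ‖g0 s‖ ≤ (ε * Real.exp (-R t)) * K t s := by
    intro t ht s hs
    obtain ⟨hKeq, hMst⟩ := hKfacts ht s hs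
    have hsI : s ∈ I := hDomI ht hs
    have : ‖g0 s‖ = Real.exp (-R s) * ‖q s 0‖ := by
      rw [hg0, norm_mul, Complex.norm_exp]
      simp [hR]
    rw [this, hKeq]
    have h1 : ‖q s 0‖ ≤ ε := hqb s hsI 0
    have h2 : Real.exp (R t - R s) ≤ (1 + (M t - M s)) * Real.exp (R t - R s) := by
      nlinarith [Real.exp_pos (R t - R s)]
    calc Real.exp (-R s) * ‖q s 0‖ ≤ Real.exp (-R s) * ε := by
          exact mul_le_mul_of_nonneg_left h1 (Real.exp_pos _).le
      _ = (ε * Real.exp (-R t)) * Real.exp (R t - R s) := by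
          rw [show -R s = -R t + (R t - R s) by ring, Real.exp_add]; ring
      _ ≤ (ε * Real.exp (-R t)) * ((1 + (M t - M s)) * Real.exp (R t - R s)) := by
          apply mul_le_mul_of_nonneg_left h2 (by positivity)
  have hbound1 : ∀ {t : ℝ}, t ∈ I → ∀ s ∈ Dom a t,
      ‖g1 s‖ ≤ (ε * Real.exp (-R t)) * K t s := by
    intro t ht s hs
    obtain ⟨hKeq, hMst⟩ := hKfacts ht s hs
    have hsI : s ∈ I := hDomI ht hs
    have : ‖g1 s‖ = Real.exp (-R s) * ‖q s 1‖ := by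
      rw [hg1, norm_mul, Complex.norm_exp]
      simp [hR]
    rw [this, hKeq]
    have h1 : ‖q s 1‖ ≤ ε := hqb s hsI 1
    have h2 : Real.exp (R t - R s) ≤ (1 + (M t - M s)) * Real.exp (R t - R s) := by
      nlinarith [Real.exp_pos (R t - R s)]
    calc Real.exp (-R s) * ‖q s 1‖ ≤ Real.exp (-R s) * ε := by
          exact mul_le_mul_of_nonneg_left h1 (Real.exp_pos _).le
      _ = (ε * Real.exp (-R t)) * Real.exp (R t - R s) := by
          rw [show -R s = -R t + (R t - R s) by ring, Real.exp_add]; ring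
      _ ≤ (ε * Real.exp (-R t)) * ((1 + (M t - M s)) * Real.exp (R t - R s)) := by
          apply mul_le_mul_of_nonneg_left h2 (by positivity)
  have hbound2 : ∀ {t : ℝ}, t ∈ I → ∀ s ∈ Dom a t,
      ‖g2 s‖ ≤ ((1 + |M t|) * (ε * Real.exp (-R t))) * K t s := by
    intro t ht s hs
    obtain ⟨hKeq, hMst⟩ := hKfacts ht s hs
    have hsI : s ∈ I := hDomI ht hs
    have hMs : |M s| ≤ (1 + |M t|) * (1 + (M t - M s)) := by
      rcases abs_cases (M t) with ⟨h, _⟩ | ⟨h, _⟩ <;> rcases abs_cases (M s) with ⟨h', _⟩ | ⟨h', _⟩ <;>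
        nlinarith [abs_nonneg (M t), abs_nonneg (M s)]
    have hg2n : ‖g2 s‖ = |M s| * (Real.exp (-R s) * ‖q s 1‖) := by
      rw [hg2, norm_mul, norm_mul, Complex.norm_real, Complex.norm_exp]
      simp [hR, Real.norm_eq_abs]
    rw [hg2n, hKeq]
    have h1 : ‖q s 1‖ ≤ ε := hqb s hsI 1
    calc |M s| * (Real.exp (-R s) * ‖q s 1‖)
        ≤ ((1 + |M t|) * (1 + (M t - M s))) * (Real.exp (-R s) * ε) := by
          apply mul_le_mul hMs (mul_le_mul_of_nonneg_left h1 (Real.exp_pos _).le)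
            (by positivity) (by positivity)
      _ = ((1 + |M t|) * (ε * Real.exp (-R t))) * ((1 + (M t - M s)) * Real.exp (R t - R s)) := by
          rw [show -R s = -R t + (R t - R s) by ring, Real.exp_add]; ring
  have hInt0 : ∀ {t : ℝ}, t ∈ I → IntegrableOn g0 (Dom a t) :=
    fun {t} ht => key ht g0 hg0c _ (hbound0 ht)
  have hInt1 : ∀ {t : ℝ}, t ∈ I → IntegrableOn g1 (Dom a t) :=
    fun {t} ht => key ht g1 hg1c _ (hbound1 ht)
  have hInt2 : ∀ {t : ℝ}, t ∈ I → IntegrableOn g2 (Dom a t) :=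
    fun {t} ht => key ht g2 hg2c _ (hbound2 ht)
  set G0 : ℝ → ℂ := fun u => ∫ s in Dom a u, g0 s with hG0def
  set G1 : ℝ → ℂ := fun u => ∫ s in Dom a u, g1 s with hG1def
  set G2 : ℝ → ℂ := fun u => ∫ s in Dom a u, g2 s with hG2def
  have hrep : ∀ (g : ℝ → ℂ), (∀ {u : ℝ}, u ∈ I → IntegrableOn g (Dom a u)) →
      ∀ t ∈ I, ∫ s in Dom a t, g s = (∫ s in Dom a t₀, g s) + ∫ s in t₀..t, g s := by
    intro g hint t ht
    rcases le_total t₀ t with h | h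
    · exact Gdiff (hI2 t₀ ht₀).1 h (hint ht)
    · have h2 := Gdiff (hI2 t ht).1 h (hint ht₀)
      rw [h2, intervalIntegral.integral_symm]; ring
  have hGd : ∀ (g : ℝ → ℂ), ContinuousOn g I → (∀ {u : ℝ}, u ∈ I → IntegrableOn g (Dom a u)) →
      ∀ t ∈ I, HasDerivWithinAt (fun u => ∫ s in Dom a u, g s) (g t) I t := by
    intro g hgc hint t ht
    have h1 : HasDerivWithinAt (fun u => (∫ s in Dom a t₀, g s) + ∫ s in t₀..u, g s) (g t) I t :=
      (ftc_within hI1 hI2 hgc ht₀ ht).const_add _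
    exact h1.congr (fun u hu => hrep g hint u hu) (hrep g hint t ht)
  have hG0d : ∀ t ∈ I, HasDerivWithinAt G0 (g0 t) I t :=
    hGd g0 hg0c (fun {u} hu => hInt0 hu)
  have hG1d : ∀ t ∈ I, HasDerivWithinAt G1 (g1 t) I t :=
    hGd g1 hg1c (fun {u} hu => hInt1 hu)
  have hG2d : ∀ t ∈ I, HasDerivWithinAt G2 (g2 t) I t :=
    hGd g2 hg2c (fun {u} hu => hInt2 hu)
  set Mc : ℝ → ℂ := fun u => ∫ x in t₀..u, ((m x : ℂ)) with hMcdef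
  have hMceq : ∀ u, Mc u = ((M u : ℝ) : ℂ) := by
    intro u
    rw [hMcdef, hM]
    exact intervalIntegral.integral_ofReal
  have hMcd : ∀ t ∈ I, HasDerivWithinAt Mc ((m t : ℂ)) I t := fun t ht =>
    ftc_within hI1 hI2 (Complex.continuous_ofReal.comp_continuousOn hm) ht₀ ht
  set φ : ℝ → Fin 2 → ℂ := fun u => ![Complex.exp (Λ u) * (G0 u + Mc u * G1 u - G2 u),
    Complex.exp (Λ u) * G1 u] with hφ
  have hone : ∀ u : ℝ, Complex.exp (Λ u) * Complex.exp (-Λ u) = 1 := by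
    intro u; rw [← Complex.exp_add]; simp
  have hmv : ∀ (u : ℝ) (v : Fin 2 → ℂ),
      (!![l u, (m u : ℂ); 0, l u]).mulVec v = ![l u * v 0 + (m u : ℂ) * v 1, l u * v 1] := by
    intro u v
    funext i
    fin_cases i <;>
      simp [Matrix.mulVec, dotProduct, Fin.sum_univ_two]
  -- derivative property
  have hderiv : ∀ t ∈ I,
      HasDerivWithinAt φ ((!![l t, (m t : ℂ); 0, l t]).mulVec (φ t) + q t) I t := by
    intro t ht
    have hΛd : HasDerivWithinAt Λ (l t) I t := ftc_within hI1 hI2 hl ht₀ ht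
    have hexp : HasDerivWithinAt (fun u => Complex.exp (Λ u)) (Complex.exp (Λ t) * l t) I t :=
      hΛd.cexp
    have hc1 : HasDerivWithinAt (fun u => Complex.exp (Λ u) * G1 u)
        (Complex.exp (Λ t) * l t * G1 t + Complex.exp (Λ t) * g1 t) I t :=
      hexp.mul (hG1d t ht)
    have hinner : HasDerivWithinAt (fun u => G0 u + Mc u * G1 u - G2 u)
        (g0 t + ((m t : ℂ) * G1 t + Mc t * g1 t) - g2 t) I t :=
      ((hG0d t ht).add ((hMcd t ht).mul (hG1d t ht))).sub (hG2d t ht)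
    have hc0 : HasDerivWithinAt (fun u => Complex.exp (Λ u) * (G0 u + Mc u * G1 u - G2 u))
        (Complex.exp (Λ t) * l t * (G0 t + Mc t * G1 t - G2 t)
          + Complex.exp (Λ t) * (g0 t + ((m t : ℂ) * G1 t + Mc t * g1 t) - g2 t)) I t :=
      hexp.mul hinner
    rw [hasDerivWithinAt_pi]
    intro i
    fin_cases i
    · have htarget : ((!![l t, (m t : ℂ); 0, l t]).mulVec (φ t) + q t) 0
          = Complex.exp (Λ t) * l t * (G0 t + Mc t * G1 t - G2 t)
            + Complex.exp (Λ t) * (g0 t + ((m t : ℂ) * G1 t + Mc t * g1 t) - g2 t) := by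
        rw [Pi.add_apply, hmv]
        simp only [hφ, Matrix.cons_val_zero, Matrix.cons_val_one, Matrix.head_cons]
        have hx : Complex.exp (Λ t) * (g0 t + ((m t : ℂ) * G1 t + Mc t * g1 t) - g2 t)
            = q t 0 + (m t : ℂ) * (Complex.exp (Λ t) * G1 t) := by
          have h5 : Complex.exp (Λ t) * (g0 t + ((m t : ℂ) * G1 t + Mc t * g1 t) - g2 t)
              = (Complex.exp (Λ t) * Complex.exp (-Λ t)) * q t 0
                + (m t : ℂ) * (Complex.exp (Λ t) * G1 t) := by
            rw [hg0, hg1, hg2, hMceq]; ring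
          rw [h5, hone]; ring
        rw [hx]; ring
      have hfun : (fun u => φ u 0) = fun u => Complex.exp (Λ u) * (G0 u + Mc u * G1 u - G2 u) := by
        funext u
        simp only [hφ, Matrix.cons_val_zero]
      show HasDerivWithinAt (fun u => φ u 0) (((!![l t, (m t : ℂ); 0, l t]).mulVec (φ t) + q t) 0) I t
      rw [htarget, hfun]
      exact hc0
    · have htarget : ((!![l t, (m t : ℂ); 0, l t]).mulVec (φ t) + q t) 1
          = Complex.exp (Λ t) * l t * G1 t + Complex.exp (Λ t) * g1 t := by
        rw [Pi.add_apply, hmv]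
        simp only [hφ, Matrix.cons_val_zero, Matrix.cons_val_one, Matrix.head_cons]
        have hx : Complex.exp (Λ t) * g1 t = q t 1 := by
          have h5 : Complex.exp (Λ t) * g1 t = (Complex.exp (Λ t) * Complex.exp (-Λ t)) * q t 1 := by
            rw [hg1]; ring
          rw [h5, hone]; ring
        rw [hx]; ring
      have hfun : (fun u => φ u 1) = fun u => Complex.exp (Λ u) * G1 u := by
        funext u
        simp only [hφ, Matrix.cons_val_one, Matrix.cons_val_zero]
      show HasDerivWithinAt (fun u => φ u 1) (((!![l t, (m t : ℂ); 0, l t]).mulVec (φ t) + q t) 1) I t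
      rw [htarget, hfun]
      exact hc1
  -- closed formula for component 0
  have hform : ∀ t ∈ I, φ t 0 = ∫ s in Dom a t, Complex.exp (Λ t - Λ s) *
      (q s 0 + ((M t : ℂ) - (M s : ℂ)) * q s 1) := by
    intro t ht
    have hcomb : G0 t + Mc t * G1 t - G2 t
        = ∫ s in Dom a t, Complex.exp (-Λ s) * (q s 0 + ((M t : ℂ) - (M s : ℂ)) * q s 1) := by
      have h1 : Mc t * G1 t = ∫ s in Dom a t, Mc t * g1 s := by
        rw [hG1def]
        exact (MeasureTheory.integral_const_mul _ _).symm
      have h2 : G0 t + Mc t * G1 t = ∫ s in Dom a t, (g0 s + Mc t * g1 s) := by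
        rw [hG0def, h1]
        exact (integral_add (hInt0 ht) ((hInt1 ht).const_mul _)).symm
      have h3 : G0 t + Mc t * G1 t - G2 t = ∫ s in Dom a t, (g0 s + Mc t * g1 s - g2 s) := by
        rw [h2, hG2def]
        exact (integral_sub ((hInt0 ht).add ((hInt1 ht).const_mul _)) (hInt2 ht)).symm
      rw [h3]
      congr 1
      funext s
      rw [hg0, hg1, hg2, hMceq]
      ring
    have hφ0 : φ t 0 = Complex.exp (Λ t) * (G0 t + Mc t * G1 t - G2 t) := by
      simp only [hφ, Matrix.cons_val_zero]
    rw [hφ0, hcomb, ← MeasureTheory.integral_const_mul]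
    congr 1
    funext s
    rw [show Complex.exp (Λ t - Λ s) = Complex.exp (Λ t) * Complex.exp (-Λ s) by
      rw [sub_eq_add_neg, Complex.exp_add]]
    ring
  have hform1 : ∀ t ∈ I, φ t 1 = ∫ s in Dom a t, Complex.exp (Λ t - Λ s) * q s 1 := by
    intro t ht
    have hφ1 : φ t 1 = Complex.exp (Λ t) * G1 t := by
      simp only [hφ, Matrix.cons_val_one, Matrix.cons_val_zero]
    rw [hφ1, hG1def, ← MeasureTheory.integral_const_mul]
    congr 1
    funext s
    rw [hg1, show Complex.exp (Λ t - Λ s) = Complex.exp (Λ t) * Complex.exp (-Λ s) by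
      rw [sub_eq_add_neg, Complex.exp_add]]
    ring
  -- bounds
  have hbnd : ∀ t ∈ I, ∀ i, ‖φ t i‖ ≤ ε * kap a l m t := by
    intro t ht i
    have hkapeq : kap a l m t = ∫ s in Dom a t, K t s := rfl
    have hmain : ∀ (f : ℝ → ℂ), (∀ s ∈ Dom a t, ‖f s‖ ≤ ε * K t s) →
        ‖∫ s in Dom a t, f s‖ ≤ ε * kap a l m t := by
      intro f hf
      refine le_trans (norm_integral_le_integral_norm _) ?_
      have h2 : ∫ s in Dom a t, ‖f s‖ ≤ ∫ s in Dom a t, ε * K t s := by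
        refine integral_mono_of_nonneg (ae_of_all _ fun s => norm_nonneg _)
          ((hker t ht).const_mul ε) ?_
        exact (ae_restrict_iff' (measurableSet_Dom a t)).2 (ae_of_all _ hf)
      refine le_trans h2 ?_
      rw [hkapeq, MeasureTheory.integral_const_mul]
    have hexpnorm : ∀ s : ℝ, ‖Complex.exp (Λ t - Λ s)‖ = Real.exp (R t - R s) := by
      intro s
      rw [Complex.norm_exp]
      simp [hR]
    fin_cases i
    · rw [show (⟨0, by norm_num⟩ : Fin 2) = 0 from rfl, hform t ht]
      refine hmain _ ?_
      intro s hs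
      obtain ⟨hKeq, hMst⟩ := hKfacts ht s hs
      have hsI : s ∈ I := hDomI ht hs
      rw [norm_mul, hexpnorm s, hKeq]
      have h4 : ‖q s 0 + ((M t : ℂ) - (M s : ℂ)) * q s 1‖ ≤ ε * (1 + (M t - M s)) := by
        refine le_trans (norm_add_le _ _) ?_
        have h5 : ‖((M t : ℂ) - (M s : ℂ)) * q s 1‖ ≤ (M t - M s) * ε := by
          rw [norm_mul]
          have h6 : ‖(M t : ℂ) - (M s : ℂ)‖ = M t - M s := by
            rw [show (M t : ℂ) - (M s : ℂ) = ((M t - M s : ℝ) : ℂ) by push_cast; ring,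
              Complex.norm_real, Real.norm_eq_abs, abs_of_nonneg hMst]
          rw [h6]
          exact mul_le_mul_of_nonneg_left (hqb s hsI 1) hMst
        have h7 := hqb s hsI 0
        nlinarith
      calc Real.exp (R t - R s) * ‖q s 0 + ((M t : ℂ) - (M s : ℂ)) * q s 1‖
          ≤ Real.exp (R t - R s) * (ε * (1 + (M t - M s))) :=
            mul_le_mul_of_nonneg_left h4 (Real.exp_pos _).le
        _ = ε * ((1 + (M t - M s)) * Real.exp (R t - R s)) := by ring
    · rw [show (⟨1, by norm_num⟩ : Fin 2) = 1 from rfl, hform1 t ht]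
      refine hmain _ ?_
      intro s hs
      obtain ⟨hKeq, hMst⟩ := hKfacts ht s hs
      have hsI : s ∈ I := hDomI ht hs
      rw [norm_mul, hexpnorm s, hKeq]
      have h7 := hqb s hsI 1
      calc Real.exp (R t - R s) * ‖q s 1‖ ≤ Real.exp (R t - R s) * ε :=
            mul_le_mul_of_nonneg_left h7 (Real.exp_pos _).le
        _ ≤ ε * ((1 + (M t - M s)) * Real.exp (R t - R s)) := by
            nlinarith [mul_nonneg (mul_nonneg hε hMst) (Real.exp_pos (R t - R s)).le]
  exact ⟨φ, hderiv, hbnd, hform⟩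

lemma mulVec_formula (x y : ℂ) (v : Fin 2 → ℂ) :
    (!![x, y; 0, x]).mulVec v = ![x * v 0 + y * v 1, x * v 1] := by
  funext i
  fin_cases i <;> simp [Matrix.mulVec, dotProduct, Fin.sum_univ_two]

include hI1 hI2 in
lemma solution_zero (hab : a < b) (hl : ContinuousOn l I) (hm : ContinuousOn m I)
    (ht₀ : t₀ ∈ I) (ht₀a : a < (t₀ : EReal)) (ht₀b : (t₀ : EReal) < b)
    (hlim : Tendsto (fun t => ∫ s in t..t₀, (l s).re)
      (Filter.comap (fun x : ℝ => (x : EReal)) (nhdsWithin a (Ioi a))) atBot)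
    {x : ℝ → Fin 2 → ℂ}
    (hx : ∀ t ∈ I, HasDerivWithinAt x ((!![l t, (m t : ℂ); 0, l t]).mulVec (x t)) I t)
    {B : ℝ} (hB0 : 0 ≤ B) (hB : ∀ t ∈ I, ∀ i, ‖x t i‖ ≤ B) :
    ∀ t ∈ I, x t = 0 := by
  classical
  set Λ : ℝ → ℂ := Lam l t₀ with hΛ
  set R : ℝ → ℝ := fun u => (Λ u).re with hR
  set O : Set ℝ := {u : ℝ | a < (u : EReal) ∧ (u : EReal) < b} with hO
  have hO_open : IsOpen O := by
    have : O = (fun u : ℝ => (u : EReal)) ⁻¹' (Ioo a b) := by ext u; simp [hO]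
    rw [this]
    exact (isOpen_Ioo).preimage continuous_coe_real_ereal
  have hO_sub : O ⊆ I := fun u hu => hI1 u hu.1 hu.2
  have ht₀O : t₀ ∈ O := ⟨ht₀a, ht₀b⟩
  have hO_conv : Convex ℝ O := by
    rw [convex_iff_ordConnected]
    constructor
    intro u hu v hv z hz
    exact ⟨lt_of_lt_of_le hu.1 (by exact_mod_cast hz.1),
      lt_of_le_of_lt (by exact_mod_cast hz.2 : (z : EReal) ≤ (v : EReal)) hv.2⟩
  have hmemnhds : ∀ {u : ℝ}, u ∈ O → I ∈ 𝓝 u := fun {u} hu =>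
    Filter.mem_of_superset (hO_open.mem_nhds hu) hO_sub
  have hΛd : ∀ u ∈ O, HasDerivAt Λ (l u) u := fun u hu =>
    (ftc_within hI1 hI2 hl ht₀ (hO_sub hu)).hasDerivAt (hmemnhds hu)
  have hxd : ∀ (i : Fin 2), ∀ u ∈ O, HasDerivAt (fun v => x v i)
      ((!![l u, (m u : ℂ); 0, l u]).mulVec (x u) i) u := fun i u hu =>
    ((hasDerivWithinAt_pi.1 (hx u (hO_sub hu)) i).hasDerivAt (hmemnhds hu))
  -- constancy helper
  have const_help : ∀ (f : ℝ → ℂ), (∀ u ∈ O, HasDerivAt f 0 u) →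
      ∀ u ∈ O, f u = f t₀ := by
    intro f hf u hu
    have hz : (1 : ℝ →L[ℝ] ℝ).smulRight (0 : ℂ) = 0 := by ext z; simp
    refine hO_conv.is_const_of_fderivWithin_eq_zero
      (fun v hv => ((hf v hv).differentiableAt).differentiableWithinAt) ?_ hu ht₀O
    intro v hv
    have h1 : HasFDerivWithinAt f ((1 : ℝ →L[ℝ] ℝ).smulRight (0 : ℂ)) O v :=
      ((hf v hv).hasFDerivAt).hasFDerivWithinAt
    rw [h1.fderivWithin (hO_open.uniqueDiffWithinAt hv), hz]
  have hone : ∀ u : ℝ, Complex.exp (Λ u) * Complex.exp (-Λ u) = 1 := by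
    intro u; rw [← Complex.exp_add]; simp
  have hRt₀ : R t₀ = 0 := by
    simp [hR, hΛ, Lam, intervalIntegral.integral_same]
  -- the filter
  set F := Filter.comap (fun x : ℝ => (x : EReal)) (nhdsWithin a (Ioi a)) with hF
  have hFne : F.NeBot := by
    refine Filter.comap_neBot fun U hU => ?_
    obtain ⟨c, hc, hsub⟩ := (nhdsGT_basis_of_exists_gt ⟨b, hab⟩).mem_iff.1 hU
    obtain ⟨r, hr1, hr2⟩ := EReal.exists_between_coe_real hc
    exact ⟨r, hsub ⟨hr1, hr2⟩⟩
  have hFO : {u : ℝ | u ∈ O} ∈ F := by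
    rw [hF]
    have h1 : Ioi a ∩ Iio b ∈ 𝓝[>] a :=
      inter_mem self_mem_nhdsWithin (mem_nhdsWithin_of_mem_nhds (Iio_mem_nhds hab))
    have h2 : (fun x : ℝ => (x : EReal)) ⁻¹' (Ioi a ∩ Iio b) ∈
        Filter.comap (fun x : ℝ => (x : EReal)) (𝓝[>] a) := Filter.preimage_mem_comap h1
    exact Filter.mem_of_superset h2 (fun z hz => ⟨hz.1, hz.2⟩)
  have hRlim : ∀ u ∈ O, ∫ s in u..t₀, (l s).re = - R u := by
    intro u hu
    have hz : Lam l t₀ t₀ = 0 := intervalIntegral.integral_same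
    rw [re_additive hI1 hI2 hl ht₀ (hO_sub hu) ht₀, hz]
    simp [hR, hΛ]
  -- key step : a function of the form  u ↦ exp (Λ u) * c  bounded by B on O has c = 0
  have main : ∀ (c : ℂ), (∀ u ∈ O, ‖Complex.exp (Λ u) * c‖ ≤ B) → c = 0 := by
    intro c hc
    by_contra hc0
    have hnorm : 0 < ‖c‖ := norm_pos_iff.2 hc0
    have hev1 : ∀ᶠ u in F, (∫ s in u..t₀, (l s).re) ≤ - Real.log ((B + 1) / ‖c‖) :=
      hlim.eventually (eventually_le_atBot _)
    obtain ⟨u, hu1, hu2⟩ := (hev1.and hFO).exists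
    have hRu : Real.log ((B + 1) / ‖c‖) ≤ R u := by
      rw [hRlim u hu2] at hu1; linarith
    have h3 : (B + 1) / ‖c‖ ≤ Real.exp (R u) := by
      calc (B + 1) / ‖c‖ = Real.exp (Real.log ((B + 1) / ‖c‖)) :=
            (Real.exp_log (by positivity)).symm
        _ ≤ Real.exp (R u) := Real.exp_le_exp.2 hRu
    have h4 : B + 1 ≤ Real.exp (R u) * ‖c‖ := by
      rw [div_le_iff₀ hnorm] at h3; linarith
    have h5 : ‖Complex.exp (Λ u) * c‖ = Real.exp (R u) * ‖c‖ := by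
      rw [norm_mul, Complex.norm_exp]
    have h6 := hc u hu2
    rw [h5] at h6
    linarith
  -- second component
  have hy1d : ∀ u ∈ O, HasDerivAt (fun v => Complex.exp (-Λ v) * x v 1) 0 u := by
    intro u hu
    have h1 : HasDerivAt (fun v => Complex.exp (-Λ v))
        (Complex.exp (-Λ u) * (-(l u))) u := ((hΛd u hu).neg).cexp
    have h2 : HasDerivAt (fun v => x v 1) (l u * x u 1) u := by
      have := hxd 1 u hu
      rwa [mulVec_formula, Matrix.cons_val_one, Matrix.cons_val_zero] at this
    have h3 := h1.mul h2
    have h4 : Complex.exp (-Λ u) * -l u * x u 1 + Complex.exp (-Λ u) * (l u * x u 1) = 0 := by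
      ring
    rwa [h4] at h3
  have hx1 : ∀ u ∈ O, x u 1 = Complex.exp (Λ u) * (Complex.exp (-Λ t₀) * x t₀ 1) := by
    intro u hu
    have h1 := const_help _ hy1d u hu
    calc x u 1 = Complex.exp (Λ u) * (Complex.exp (-Λ u) * x u 1) := by
          rw [← mul_assoc, hone]; ring
      _ = Complex.exp (Λ u) * (Complex.exp (-Λ t₀) * x t₀ 1) := by rw [h1]
  have hc2 : Complex.exp (-Λ t₀) * x t₀ 1 = 0 := by
    refine main _ fun u hu => ?_
    rw [← hx1 u hu]
    exact hB u (hO_sub hu) 1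
  have hx1z : ∀ u ∈ O, x u 1 = 0 := by
    intro u hu; rw [hx1 u hu, hc2, mul_zero]
  -- first component
  have hy0d : ∀ u ∈ O, HasDerivAt (fun v => Complex.exp (-Λ v) * x v 0) 0 u := by
    intro u hu
    have h1 : HasDerivAt (fun v => Complex.exp (-Λ v))
        (Complex.exp (-Λ u) * (-(l u))) u := ((hΛd u hu).neg).cexp
    have h2 : HasDerivAt (fun v => x v 0) (l u * x u 0 + (m u : ℂ) * x u 1) u := by
      have := hxd 0 u hu
      rwa [mulVec_formula, Matrix.cons_val_zero] at this
    have h3 := h1.mul h2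
    have h4 : Complex.exp (-Λ u) * -l u * x u 0
        + Complex.exp (-Λ u) * (l u * x u 0 + (m u : ℂ) * x u 1) = 0 := by
      rw [hx1z u hu]; ring
    rwa [h4] at h3
  have hx0 : ∀ u ∈ O, x u 0 = Complex.exp (Λ u) * (Complex.exp (-Λ t₀) * x t₀ 0) := by
    intro u hu
    have h1 := const_help _ hy0d u hu
    calc x u 0 = Complex.exp (Λ u) * (Complex.exp (-Λ u) * x u 0) := by
          rw [← mul_assoc, hone]; ring
      _ = Complex.exp (Λ u) * (Complex.exp (-Λ t₀) * x t₀ 0) := by rw [h1]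
  have hc1 : Complex.exp (-Λ t₀) * x t₀ 0 = 0 := by
    refine main _ fun u hu => ?_
    rw [← hx0 u hu]
    exact hB u (hO_sub hu) 0
  have hxO : ∀ u ∈ O, x u = 0 := by
    intro u hu
    funext i
    fin_cases i
    · show x u 0 = 0
      rw [hx0 u hu, hc1, mul_zero]
    · show x u 1 = 0
      exact hx1z u hu
  -- extend to all of I by continuity
  intro t ht
  by_cases htO : t ∈ O
  · exact hxO t htO
  -- t is an endpoint; find an open interval J ⊆ O accumulating at t
  obtain ⟨J, hJO, hJne⟩ : ∃ J : Set ℝ, J ⊆ O ∧ (𝓝[J] t).NeBot := by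
    have hta : a ≤ (t : EReal) := (hI2 t ht).1
    have htb : (t : EReal) ≤ b := (hI2 t ht).2
    rcases lt_or_ge a (t : EReal) with h1 | h1
    · -- then ¬ t < b, so t = right endpoint;  use J = Ioo u t
      obtain ⟨u, hu1, hu2⟩ := EReal.exists_between_coe_real h1
      have hut : u < t := by exact_mod_cast hu2
      have hbt : b = (t : EReal) := le_antisymm (le_of_not_gt fun hc => htO ⟨h1, hc⟩) htb
      refine ⟨Ioo u t, ?_, ?_⟩
      · intro s hs
        refine ⟨lt_trans hu1 (by exact_mod_cast hs.1), ?_⟩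
        rw [hbt]
        exact_mod_cast hs.2
      · refine mem_closure_iff_nhdsWithin_neBot.1 ?_
        rw [closure_Ioo hut.ne]
        exact ⟨hut.le, le_refl t⟩
    · -- t = left endpoint (a = t); use J = Ioo t t₀
      have htt₀ : t < t₀ := by
        have : (t : EReal) < (t₀ : EReal) := lt_of_le_of_lt h1 ht₀a
        exact_mod_cast this
      have hat : a = (t : EReal) := le_antisymm hta h1
      refine ⟨Ioo t t₀, ?_, ?_⟩
      · intro s hs
        refine ⟨?_, lt_trans (by exact_mod_cast hs.2 : (s : EReal) < (t₀ : EReal)) ht₀b⟩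
        rw [hat]
        exact_mod_cast hs.1
      · refine mem_closure_iff_nhdsWithin_neBot.1 ?_
        rw [closure_Ioo htt₀.ne]
        exact ⟨le_refl t, htt₀.le⟩
  have hcont : ContinuousWithinAt x J t :=
    ((hx t ht).continuousWithinAt).mono (subset_trans hJO hO_sub)
  have h1 : Tendsto x (𝓝[J] t) (𝓝 (x t)) := hcont
  have h2 : Tendsto x (𝓝[J] t) (𝓝 0) := by
    refine Tendsto.congr' ?_ tendsto_const_nhds
    filter_upwards [self_mem_nhdsWithin] with u hu
    exact (hxO u (hJO hu)).symm
  exact tendsto_nhds_unique h1 h2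

include hI1 hI2 hm0 in
lemma kap_nonneg (ht : t₀ ∈ I) : 0 ≤ kap a l m t₀ := by
  refine setIntegral_nonneg (measurableSet_Dom a t₀) fun s hs => ?_
  have hsI : s ∈ I := Dom_subset_I hI2 ht hI1 hs
  have hst : s ≤ t₀ := le_of_lt hs.2
  have h3 : 0 ≤ ∫ τ in s..t₀, m τ := by
    apply intervalIntegral.integral_nonneg hst
    intro u hu
    exact hm0 u (uIcc_subset hI1 hI2 hsI ht (by rw [uIcc_of_le hst]; exact hu))
  positivity

include hI1 hI2 hm0 in
lemma kap_pos
    (hker : ∀ t ∈ I, IntegrableOn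
      (fun s => (1 + ∫ τ in s..t, m τ) * Real.exp (∫ τ in s..t, (l τ).re)) (Dom a t))
    (ht : t₀ ∈ I) (hta : a < (t₀ : EReal)) : 0 < kap a l m t₀ := by
  have hpos : ∀ s ∈ Dom a t₀,
      0 < (1 + ∫ τ in s..t₀, m τ) * Real.exp (∫ τ in s..t₀, (l τ).re) := by
    intro s hs
    have hsI : s ∈ I := Dom_subset_I hI2 ht hI1 hs
    have hst : s ≤ t₀ := le_of_lt hs.2
    have h3 : 0 ≤ ∫ τ in s..t₀, m τ := by
      apply intervalIntegral.integral_nonneg hst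
      intro u hu
      exact hm0 u (uIcc_subset hI1 hI2 hsI ht (by rw [uIcc_of_le hst]; exact hu))
    positivity
  rw [kap]
  refine (setIntegral_pos_iff_support_of_nonneg_ae ?_ (hker t₀ ht)).2 ?_
  · exact (ae_restrict_iff' (measurableSet_Dom a t₀)).2 (ae_of_all _ fun s hs => (hpos s hs).le)
  · obtain ⟨u, hu1, hu2⟩ := EReal.exists_between_coe_real hta
    have hut : u < t₀ := by exact_mod_cast hu2
    have hsub : Ioo u t₀ ⊆ Function.support
        (fun s => (1 + ∫ τ in s..t₀, m τ) * Real.exp (∫ τ in s..t₀, (l τ).re)) ∩ Dom a t₀ := by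
      intro s hs
      have hsD : s ∈ Dom a t₀ := ⟨lt_trans hu1 (by exact_mod_cast hs.1), hs.2⟩
      exact ⟨ne_of_gt (hpos s hsD), hsD⟩
    calc (0 : ENNReal) < volume (Ioo u t₀) := by
          rw [Real.volume_Ioo]
          exact ENNReal.ofReal_pos.2 (by linarith)
      _ ≤ _ := measure_mono hsub

end core

end S13

theorem statement13 (a b : EReal) (hab : a < b) (I : Set ℝ)
    (hI1 : ∀ x : ℝ, a < (x : EReal) → (x : EReal) < b → x ∈ I)
    (hI2 : ∀ x ∈ I, a ≤ (x : EReal) ∧ (x : EReal) ≤ b)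
    (l : ℝ → ℂ) (m : ℝ → ℝ) (hl : ContinuousOn l I) (hm : ContinuousOn m I)
    (hm0 : ∀ t ∈ I, 0 ≤ m t)
    (hker : ∀ t ∈ I, IntegrableOn
      (fun s => (1 + ∫ τ in s..t, m τ) * Real.exp (∫ τ in s..t, (l τ).re))
      {s : ℝ | a < (s : EReal) ∧ s < t})
    (hbdd : BddAbove (kappa22r a l m '' I))
    (hlim : ∀ t₀ : ℝ, a < (t₀ : EReal) → (t₀ : EReal) < b →
        Tendsto (fun t => ∫ s in t..t₀, (l s).re)
          (Filter.comap (fun x : ℝ => (x : EReal)) (nhdsWithin a (Ioi a))) atBot) :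
    UlamStable2C I (fun t => !![l t, (m t : ℂ); 0, l t]) (sSup (kappa22r a l m '' I)) ∧
    ∀ K : ℝ, UlamStable2C I (fun t => !![l t, (m t : ℂ); 0, l t]) K → sSup (kappa22r a l m '' I) ≤ K := by
  obtain ⟨t₀, ht₀a, ht₀b⟩ := EReal.exists_between_coe_real hab
  have ht₀ : t₀ ∈ I := hI1 t₀ ht₀a ht₀b
  have hker' : ∀ t ∈ I, IntegrableOn
      (fun s => (1 + ∫ τ in s..t, m τ) * Real.exp (∫ τ in s..t, (l τ).re)) (S13.Dom a t) :=
    hker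
  have hkapeq : ∀ t, S13.kap a l m t = kappa22r a l m t := fun _ => rfl
  set S := sSup (kappa22r a l m '' I) with hSdef
  have hle : ∀ t ∈ I, S13.kap a l m t ≤ S := fun t ht => le_csSup hbdd ⟨t, ht, (hkapeq t).symm⟩
  have hSpos : 0 < S :=
    lt_of_lt_of_le (S13.kap_pos hI1 hI2 hm0 hker' ht₀ ht₀a) (hle t₀ ht₀)
  constructor
  · refine ⟨hSpos, ?_⟩
    intro ε hε φ φd hφd hφdc hφb
    set q : ℝ → Fin 2 → ℂ := fun t => φd t - (!![l t, (m t : ℂ); 0, l t]).mulVec (φ t) with hqdef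
    have hφc : ContinuousOn φ I := fun t ht => (hφd t ht).continuousWithinAt
    have hφ0 : ContinuousOn (fun t => φ t 0) I := (continuous_apply 0).comp_continuousOn hφc
    have hφ1 : ContinuousOn (fun t => φ t 1) I := (continuous_apply 1).comp_continuousOn hφc
    have hAφc : ContinuousOn (fun t => (!![l t, (m t : ℂ); 0, l t]).mulVec (φ t)) I := by
      have he : (fun t => (!![l t, (m t : ℂ); 0, l t]).mulVec (φ t))
          = fun t => ![l t * φ t 0 + (m t : ℂ) * φ t 1, l t * φ t 1] :=
        funext fun t => S13.mulVec_formula _ _ _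
      rw [he]
      refine continuousOn_pi.2 fun i => ?_
      fin_cases i
      · simp; exact ((hl.mul hφ0).add ((Complex.continuous_ofReal.comp_continuousOn hm).mul hφ1))
      · simp; exact (hl.mul hφ1)
    have hqc : ContinuousOn q I := hφdc.sub hAφc
    have hqb : ∀ t ∈ I, ∀ i, ‖q t i‖ ≤ ε := fun t ht i =>
      le_trans (norm_le_pi_norm (q t) i) (hφb t ht)
    obtain ⟨ψ, hψd, hψb, -⟩ := S13.sol_spec hI1 hI2 hl hm hm0 hker' ht₀ hε.le hqc hqb
    refine ⟨fun t => φ t - ψ t, ?_, ?_⟩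
    · intro t ht
      have h1 := (hφd t ht).sub (hψd t ht)
      have h2 : φd t - ((!![l t, (m t : ℂ); 0, l t]).mulVec (ψ t) + q t)
          = (!![l t, (m t : ℂ); 0, l t]).mulVec (φ t - ψ t) := by
        rw [Matrix.mulVec_sub, hqdef]
        beta_reduce
        abel
      rwa [h2] at h1
    · intro t ht
      have h3 : φ t - (φ t - ψ t) = ψ t := by abel
      rw [h3]
      have h4 : (0:ℝ) ≤ S * ε := le_of_lt (mul_pos hSpos hε)
      refine (pi_norm_le_iff_of_nonneg h4).2 fun i => ?_
      calc ‖ψ t i‖ ≤ ε * S13.kap a l m t := hψb t ht i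
        _ ≤ ε * S := mul_le_mul_of_nonneg_left (hle t ht) hε.le
        _ = S * ε := mul_comm _ _
  · intro K hK
    refine csSup_le ⟨kappa22r a l m t₀, t₀, ht₀, rfl⟩ ?_
    rintro y ⟨ts, hts, rfl⟩
    rw [← hkapeq ts]
    by_cases hta : a < (ts : EReal)
    swap
    · have hDe : S13.Dom a ts = ∅ := by
        ext s
        simp only [S13.Dom, mem_setOf_eq, mem_empty_iff_false, iff_false, not_and]
        intro h1 h2
        exact absurd (lt_trans h1 (by exact_mod_cast h2)) hta
      have : S13.kap a l m ts = 0 := by rw [S13.kap, hDe]; simp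
      rw [this]
      exact hK.1.le
    · set Λ := S13.Lam l t₀ with hΛdef
      have hΛc : ContinuousOn Λ I := S13.contOn_Lam hI1 hI2 hl ht₀
      set θ : ℝ → ℂ := fun s => Complex.exp (Complex.I * (((Λ s).im - (Λ ts).im : ℝ) : ℂ)) with hθ
      have hθc : ContinuousOn θ I := by
        apply Complex.continuous_exp.comp_continuousOn
        apply ContinuousOn.mul continuousOn_const
        apply Complex.continuous_ofReal.comp_continuousOn
        exact (Complex.continuous_im.comp_continuousOn hΛc).sub continuousOn_const
      have hθ1 : ∀ s, ‖θ s‖ = 1 := by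
        intro s
        rw [hθ]
        simp only [Complex.norm_exp]
        norm_num [Complex.mul_re]
      set qv : ℝ → Fin 2 → ℂ := fun s => ![θ s, θ s] with hqv
      have hqvc : ContinuousOn qv I := by
        refine continuousOn_pi.2 fun i => ?_
        fin_cases i <;> simpa [hqv] using hθc
      have hqvb : ∀ t ∈ I, ∀ i, ‖qv t i‖ ≤ 1 := by
        intro t ht i
        fin_cases i <;> simp [hqv, hθ1]
      obtain ⟨ψ, hψd, hψb, hψf⟩ :=
        S13.sol_spec hI1 hI2 hl hm hm0 hker' ht₀ zero_le_one hqvc hqvb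
      have hψc : ContinuousOn ψ I := fun t ht => (hψd t ht).continuousWithinAt
      have hψ0 : ContinuousOn (fun t => ψ t 0) I := (continuous_apply 0).comp_continuousOn hψc
      have hψ1 : ContinuousOn (fun t => ψ t 1) I := (continuous_apply 1).comp_continuousOn hψc
      set φd : ℝ → Fin 2 → ℂ :=
        fun t => (!![l t, (m t : ℂ); 0, l t]).mulVec (ψ t) + qv t with hφddef
      have hφdc : ContinuousOn φd I := by
        refine ContinuousOn.add ?_ hqvc
        have he : (fun t => (!![l t, (m t : ℂ); 0, l t]).mulVec (ψ t))
            = fun t => ![l t * ψ t 0 + (m t : ℂ) * ψ t 1, l t * ψ t 1] :=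
          funext fun t => S13.mulVec_formula _ _ _
        rw [he]
        refine continuousOn_pi.2 fun i => ?_
        fin_cases i
        · simp; exact ((hl.mul hψ0).add ((Complex.continuous_ofReal.comp_continuousOn hm).mul hψ1))
        · simp; exact (hl.mul hψ1)
      have hφdb : ∀ t ∈ I, ‖φd t - (!![l t, (m t : ℂ); 0, l t]).mulVec (ψ t)‖ ≤ 1 := by
        intro t ht
        have h1 : φd t - (!![l t, (m t : ℂ); 0, l t]).mulVec (ψ t) = qv t := by
          rw [hφddef]
          exact add_sub_cancel_left _ _
        rw [h1]
        exact (pi_norm_le_iff_of_nonneg zero_le_one).2 (hqvb t ht)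
      obtain ⟨x, hxd, hxc⟩ := hK.2 1 one_pos ψ φd hψd hφdc hφdb
      have hxb : ∀ t ∈ I, ∀ i, ‖x t i‖ ≤ K + S := by
        intro t ht i
        have h1 : ‖ψ t i - x t i‖ ≤ K := by
          have h2 := norm_le_pi_norm (ψ t - x t) i
          rw [Pi.sub_apply] at h2
          refine le_trans h2 ?_
          have := hxc t ht
          rwa [mul_one] at this
        have h3 : ‖ψ t i‖ ≤ S := by
          refine le_trans (hψb t ht i) ?_
          rw [one_mul]
          exact hle t ht
        calc ‖x t i‖ = ‖ψ t i - (ψ t i - x t i)‖ := by ring_nf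
          _ ≤ ‖ψ t i‖ + ‖ψ t i - x t i‖ := norm_sub_le _ _
          _ ≤ S + K := add_le_add h3 h1
          _ = K + S := by ring
      have hx0 : x ts = 0 := by
        refine S13.solution_zero hI1 hI2 hab hl hm ht₀ ht₀a ht₀b (hlim t₀ ht₀a ht₀b)
          hxd ?_ hxb ts hts
        have : (0:ℝ) ≤ S := hSpos.le
        linarith [hK.1]
      -- value of ψ at ts
      have hval : ψ ts 0 = ((S13.kap a l m ts : ℝ) : ℂ) := by
        have hcast : ((S13.kap a l m ts : ℝ) : ℂ) = ∫ s in S13.Dom a ts,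
            (((1 + ∫ τ in s..ts, m τ) * Real.exp (∫ τ in s..ts, (l τ).re) : ℝ) : ℂ) := by
          rw [S13.kap]
          exact (integral_ofReal (𝕜 := ℂ)).symm
        rw [hψf ts hts, hcast]
        refine setIntegral_congr_fun (S13.measurableSet_Dom a ts) ?_
        intro s hs
        have hsI : s ∈ I := S13.Dom_subset_I hI2 hts hI1 hs
        have hMeq : ∫ τ in s..ts, m τ = S13.Mm m t₀ ts - S13.Mm m t₀ s :=
          S13.mm_additive hI1 hI2 hm ht₀ hsI hts
        have hReq : ∫ τ in s..ts, (l τ).re = (Λ ts).re - (Λ s).re :=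
          S13.re_additive hI1 hI2 hl ht₀ hsI hts
        show Complex.exp (Λ ts - Λ s) *
            (qv s 0 + ((S13.Mm m t₀ ts : ℂ) - (S13.Mm m t₀ s : ℂ)) * qv s 1)
          = (((1 + ∫ τ in s..ts, m τ) * Real.exp (∫ τ in s..ts, (l τ).re) : ℝ) : ℂ)
        rw [hMeq, hReq]
        have hqv0 : qv s 0 = θ s := rfl
        have hqv1 : qv s 1 = θ s := rfl
        rw [hqv0, hqv1]
        have hphase : Complex.exp (Λ ts - Λ s) * θ s
            = ((Real.exp ((Λ ts).re - (Λ s).re) : ℝ) : ℂ) := by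
          rw [hθ, ← Complex.exp_add, Complex.ofReal_exp]
          congr 1
          push_cast
          linear_combination Complex.re_add_im (Λ s) - Complex.re_add_im (Λ ts)
        have hexpand : Complex.exp (Λ ts - Λ s) *
              (θ s + ((S13.Mm m t₀ ts : ℂ) - (S13.Mm m t₀ s : ℂ)) * θ s)
            = (Complex.exp (Λ ts - Λ s) * θ s)
              * (1 + ((S13.Mm m t₀ ts : ℂ) - (S13.Mm m t₀ s : ℂ))) := by
          ring
        rw [hexpand, hphase]
        push_cast
        ring
      have hfinal : S13.kap a l m ts ≤ K := by
        have h1 : ‖ψ ts 0 - x ts 0‖ ≤ K := by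
          have h2 := norm_le_pi_norm (ψ ts - x ts) 0
          rw [Pi.sub_apply] at h2
          refine le_trans h2 ?_
          have := hxc ts hts
          rwa [mul_one] at this
        have h3 : x ts 0 = 0 := by rw [hx0]; rfl
        rw [h3, sub_zero, hval] at h1
        have h4 : ‖((S13.kap a l m ts : ℝ) : ℂ)‖ = S13.kap a l m ts := by
          rw [Complex.norm_real, Real.norm_eq_abs,
            abs_of_nonneg (S13.kap_nonneg hI1 hI2 hm0 hts)]
        rwa [h4] at h1
      exact hfinal
end
end

section
/- Let λ ∈ ℂ with Re λ ≠ 0, and let A be the constant 2×2 upper-triangular matrix with diagonal entries λ, λ and upper-right entry 1 (a Jordan block). Then the system x' = Ax is Ulam stable on ℝ with respect to the maximum norm on ℂ², and its best (minimal) Ulam constant is K_{c2} := (|Re λ| + 1)/(Re λ)²; that is, K_{c2} is an Ulam constant for x' = Ax on ℝ and every Ulam constant K for x' = Ax on ℝ satisfies K ≥ K_{c2}. -/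
open MeasureTheory Filter Set

noncomputable section

open Topology

private lemma expInt (t : ℝ) {b : ℝ} (hb : 0 < b) :
    ∫ x in Ioi t, Real.exp (-b * x) = Real.exp (-b * t) / b := by
  have h : ∀ x ∈ Ici t, HasDerivAt (fun x => -Real.exp (-b*x)/b) (Real.exp (-b*x)) x := by
    intro x _
    have := (((hasDerivAt_id x).const_mul (-b)).exp).neg.div_const b
    refine this.congr_deriv ?_
    symm
    field_simp
    rfl
  have htend : Tendsto (fun x => -Real.exp (-b*x)/b) atTop (𝓝 0) := by
    have : Tendsto (fun x : ℝ => Real.exp (-b*x)) atTop (𝓝 0) :=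
      Real.tendsto_exp_atBot.comp (tendsto_id.const_mul_atTop_of_neg (by linarith))
    simpa using (this.neg.div_const b)
  have := integral_Ioi_of_hasDerivAt_of_tendsto' h (exp_neg_integrableOn_Ioi t hb) htend
  rw [this]
  field_simp
  ring

private lemma coreA {l : ℂ} (hl : 0 < l.re) {g : ℝ → ℂ} (hg : Continuous g) {M : ℝ}
    (hM : ∀ t, ‖g t‖ ≤ M) :
    ∃ u : ℝ → ℂ, (∀ t, HasDerivAt u (l * u t + g t) t) ∧ ∀ t, ‖u t‖ ≤ M / l.re := by
  set F : ℝ → ℂ := fun s => Complex.exp (-(l * s)) * g s with hF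
  have hFcont : Continuous F := by
    exact (Complex.continuous_exp.comp (by continuity)).mul hg
  have hFnorm : ∀ s : ℝ, ‖F s‖ = Real.exp (-(l.re * s)) * ‖g s‖ := by
    intro s
    rw [hF, norm_mul, Complex.norm_exp]
    congr 2
    simp [Complex.mul_re]
  have hFle : ∀ s : ℝ, ‖F s‖ ≤ M * Real.exp (-l.re * s) := by
    intro s
    rw [hFnorm s, neg_mul]
    rw [mul_comm]
    exact mul_le_mul_of_nonneg_right (hM s) (Real.exp_pos _).le
  have hFint : ∀ t : ℝ, IntegrableOn F (Ioi t) := by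
    intro t
    refine Integrable.mono' ((exp_neg_integrableOn_Ioi t hl).const_mul M)
      hFcont.aestronglyMeasurable ?_
    exact Eventually.of_forall hFle
  set c : ℂ := -∫ s in Ioi (0:ℝ), F s with hc
  set v : ℝ → ℂ := fun t => c + ∫ s in (0:ℝ)..t, F s with hv
  have hvval : ∀ t : ℝ, v t = -∫ s in Ioi t, F s := by
    intro t
    rcases le_total 0 t with h0 | h0
    · have hsplit : ∫ s in Ioi (0:ℝ), F s = (∫ s in Ioc 0 t, F s) + ∫ s in Ioi t, F s := by
        rw [← setIntegral_union (Ioc_disjoint_Ioi le_rfl) measurableSet_Ioi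
          ((hFint 0).mono_set Ioc_subset_Ioi_self) (hFint t), Ioc_union_Ioi_eq_Ioi h0]
      rw [hv]
      simp only
      rw [intervalIntegral.integral_of_le h0, hc, hsplit]
      ring
    · have hsplit : ∫ s in Ioi t, F s = (∫ s in Ioc t 0, F s) + ∫ s in Ioi (0:ℝ), F s := by
        rw [← setIntegral_union (Ioc_disjoint_Ioi le_rfl) measurableSet_Ioi
          ((hFint t).mono_set Ioc_subset_Ioi_self) (hFint 0), Ioc_union_Ioi_eq_Ioi h0]
      rw [hv]
      simp only
      rw [intervalIntegral.integral_symm, intervalIntegral.integral_of_le h0, hc, hsplit]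
      ring
  have hvd : ∀ t : ℝ, HasDerivAt v (F t) t := by
    intro t
    exact (intervalIntegral.integral_hasDerivAt_right (hFcont.intervalIntegrable 0 t)
      (hFcont.stronglyMeasurableAtFilter _ _) hFcont.continuousAt).const_add c
  refine ⟨fun t => Complex.exp (l * t) * v t, ?_, ?_⟩
  · intro t
    have he : HasDerivAt (fun t : ℝ => Complex.exp (l * t)) (l * Complex.exp (l * t)) t := by
      have h1 : HasDerivAt (fun t : ℝ => l * (t : ℂ)) l t := by
        simpa using ((hasDerivAt_id t).ofReal_comp.const_mul l)
      simpa [mul_comm] using h1.cexp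
    have := he.mul (hvd t)
    refine this.congr_deriv ?_
    symm
    have hee : Complex.exp (l * t) * Complex.exp (-(l * t)) = 1 := by
      rw [← Complex.exp_add]; simp
    simp only [hF]
    calc l * (Complex.exp (l * t) * v t) + g t
        = l * Complex.exp (l * t) * v t + (Complex.exp (l * t) * Complex.exp (-(l * t))) * g t := by
          rw [hee]; ring
      _ = l * Complex.exp (l * ↑t) * v t + Complex.exp (l * ↑t) * (Complex.exp (-(l * ↑t)) * g t) := by ring
  · intro t
    have hvb : ‖v t‖ ≤ M * (Real.exp (-l.re * t) / l.re) := by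
      rw [hvval t, norm_neg]
      calc ‖∫ s in Ioi t, F s‖ ≤ ∫ s in Ioi t, M * Real.exp (-l.re * s) := by
            exact norm_integral_le_of_norm_le ((exp_neg_integrableOn_Ioi t hl).const_mul M)
              (Eventually.of_forall hFle)
        _ = M * (Real.exp (-l.re * t) / l.re) := by
            rw [MeasureTheory.integral_const_mul, expInt t hl]
    calc ‖Complex.exp (l * t) * v t‖ = Real.exp (l.re * t) * ‖v t‖ := by
          rw [norm_mul, Complex.norm_exp]
          congr 2
          simp [Complex.mul_re]
      _ ≤ Real.exp (l.re * t) * (M * (Real.exp (-l.re * t) / l.re)) := by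
          exact mul_le_mul_of_nonneg_left hvb (Real.exp_pos _).le
      _ = M / l.re := by
          rw [neg_mul, Real.exp_neg]
          field_simp


private lemma coreB {l : ℂ} (hl : l.re ≠ 0) {g : ℝ → ℂ} (hg : Continuous g) {M : ℝ}
    (hM : ∀ t, ‖g t‖ ≤ M) :
    ∃ u : ℝ → ℂ, (∀ t, HasDerivAt u (l * u t + g t) t) ∧ ∀ t, ‖u t‖ ≤ M / |l.re| := by
  rcases hl.lt_or_gt with hneg | hpos
  · have hpos' : 0 < (-l).re := by simpa using hneg
    obtain ⟨w, hw, hwb⟩ := coreA hpos' (g := fun t => -g (-t))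
      (by exact (hg.comp continuous_neg).neg) (M := M) (fun t => by simpa using hM (-t))
    refine ⟨fun t => w (-t), ?_, ?_⟩
    · intro t
      have h1 : HasDerivAt (fun t : ℝ => w (-t)) ((-1 : ℝ) • (-l * w (-t) + -g (- -t))) t :=
        HasDerivAt.scomp t (hw (-t)) (hasDerivAt_neg t)
      convert h1 using 1
      simp
    · intro t
      calc ‖w (-t)‖ ≤ M / (-l).re := hwb (-t)
        _ = M / |l.re| := by rw [Complex.neg_re, abs_of_neg hneg]
  · obtain ⟨u, hu, hub⟩ := coreA hpos hg hM
    exact ⟨u, hu, fun t => by rw [abs_of_pos hpos]; exact hub t⟩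


private lemma solz {l : ℂ} (hl : l.re ≠ 0) {y : ℝ → ℂ} (hy : ∀ t, HasDerivAt y (l * y t) t)
    {C : ℝ} (hC : ∀ t, ‖y t‖ ≤ C) : ∀ t, y t = 0 := by
  set w : ℝ → ℂ := fun t => Complex.exp (-(l * t)) * y t with hw
  have hwd : ∀ t : ℝ, HasDerivAt w 0 t := by
    intro t
    have he : HasDerivAt (fun t : ℝ => Complex.exp (-(l * t))) (-l * Complex.exp (-(l * t))) t := by
      have h1 : HasDerivAt (fun t : ℝ => -l * (t : ℂ)) (-l) t := by
        simpa using ((hasDerivAt_id t).ofReal_comp.const_mul (-l))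
      have := h1.cexp
      simp only [neg_mul] at this ⊢
      simpa [mul_comm] using this
    have := he.mul (hy t)
    refine this.congr_deriv ?_
    symm
    ring
  have hconst : ∀ t : ℝ, w t = w 0 := by
    intro t
    exact is_const_of_deriv_eq_zero (fun s => (hwd s).differentiableAt)
      (fun s => (hwd s).deriv) t 0
  have hyt : ∀ t : ℝ, y t = Complex.exp (l * t) * y 0 := by
    intro t
    have h1 := hconst t
    rw [hw] at h1
    simp only [Complex.ofReal_zero, mul_zero, neg_zero, Complex.exp_zero, one_mul] at h1
    calc y t = Complex.exp (l * t) * (Complex.exp (-(l * t)) * y t) := by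
          rw [← mul_assoc, ← Complex.exp_add]; simp
      _ = Complex.exp (l * t) * y 0 := by rw [h1]
  by_contra hcon
  push_neg at hcon
  obtain ⟨t0, ht0⟩ := hcon
  have hy0 : y 0 ≠ 0 := by
    intro h0
    exact ht0 (by rw [hyt t0, h0, mul_zero])
  set r := ‖y 0‖ with hr
  have hrpos : 0 < r := norm_pos_iff.2 hy0
  have hCpos : 0 < C := lt_of_lt_of_le hrpos (by simpa using hC 0)
  set t1 : ℝ := (Real.log (C / r) + 1) / l.re with ht1
  have hnorm : ‖y t1‖ = Real.exp (l.re * t1) * r := by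
    rw [hyt t1, norm_mul, Complex.norm_exp]
    congr 2
    simp [Complex.mul_re]
  have hlt : l.re * t1 = Real.log (C / r) + 1 := by
    rw [ht1]; field_simp
  have : ‖y t1‖ = Real.exp 1 * C := by
    rw [hnorm, hlt, Real.exp_add, Real.exp_log (by positivity)]
    field_simp
  have hle := hC t1
  rw [this] at hle
  nlinarith [Real.exp_one_gt_d9]

private lemma upper (l : ℂ) (h : l.re ≠ 0) :
    UlamStable2C Set.univ (fun _ => !![l, 1; 0, l]) ((|l.re| + 1) / (l.re) ^ 2) := by
  have hA : 0 < |l.re| := abs_pos.2 h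
  have hA2 : 0 < l.re ^ 2 := by rw [← sq_abs]; positivity
  constructor
  · positivity
  intro ε hε φ φd hderiv hcont hbound
  have hd : ∀ t, HasDerivAt φ (φd t) t := fun t => hasDerivWithinAt_univ.1 (hderiv t trivial)
  have hdi : ∀ t : ℝ, ∀ i, HasDerivAt (fun s => φ s i) (φd t i) t := fun t => hasDerivAt_pi.1 (hd t)
  have hφc : Continuous φ := continuous_iff_continuousAt.2 fun t => (hd t).continuousAt
  have hφdc : Continuous φd := continuousOn_univ.1 hcont
  set f₁ : ℝ → ℂ := fun t => φd t 0 - (l * φ t 0 + φ t 1) with hf₁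
  set f₂ : ℝ → ℂ := fun t => φd t 1 - l * φ t 1 with hf₂
  have hf₁c : Continuous f₁ := by
    apply Continuous.sub
    · exact (continuous_apply (0 : Fin 2)).comp hφdc
    · exact (continuous_const.mul ((continuous_apply (0 : Fin 2)).comp hφc)).add
        ((continuous_apply (1 : Fin 2)).comp hφc)
  have hf₂c : Continuous f₂ := by
    apply Continuous.sub
    · exact (continuous_apply (1 : Fin 2)).comp hφdc
    · exact continuous_const.mul ((continuous_apply (1 : Fin 2)).comp hφc)
  have hcomp : ∀ t : ℝ, (φd t - (!![l, 1; 0, l]).mulVec (φ t)) 0 = f₁ t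
      ∧ (φd t - (!![l, 1; 0, l]).mulVec (φ t)) 1 = f₂ t := by
    intro t
    constructor <;> simp [Matrix.mulVec, dotProduct, Fin.sum_univ_two, hf₁, hf₂]
  have hf₁b : ∀ t, ‖f₁ t‖ ≤ ε := by
    intro t
    rw [← (hcomp t).1]
    exact le_trans (norm_le_pi_norm _ 0) (hbound t trivial)
  have hf₂b : ∀ t, ‖f₂ t‖ ≤ ε := by
    intro t
    rw [← (hcomp t).2]
    exact le_trans (norm_le_pi_norm _ 1) (hbound t trivial)
  obtain ⟨u₂, hu₂, hu₂b⟩ := coreB h hf₂c hf₂b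
  have hu₂c : Continuous u₂ := continuous_iff_continuousAt.2 fun t => (hu₂ t).continuousAt
  have hg₁b : ∀ t, ‖u₂ t + f₁ t‖ ≤ ε / |l.re| + ε :=
    fun t => le_trans (norm_add_le _ _) (add_le_add (hu₂b t) (hf₁b t))
  obtain ⟨u₁, hu₁, hu₁b⟩ := coreB h (hu₂c.add hf₁c) hg₁b
  have key : ∀ A : ℝ, 0 < A → (ε / A + ε) / A = (A + 1) / A ^ 2 * ε := by
    intro A hApos
    field_simp
    ring
  have key2 : ∀ A : ℝ, 0 < A → ε / A ≤ (A + 1) / A ^ 2 * ε := by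
    intro A hApos
    have hdiff : (A + 1) / A ^ 2 * ε - ε / A = ε / A ^ 2 := by
      field_simp
      ring
    have h0 : 0 ≤ ε / A ^ 2 := by positivity
    linarith
  have hKe : (ε / |l.re| + ε) / |l.re| = (|l.re| + 1) / l.re ^ 2 * ε := by
    rw [← sq_abs]
    exact key _ hA
  have hKe2 : ε / |l.re| ≤ (|l.re| + 1) / l.re ^ 2 * ε := by
    rw [← sq_abs]
    exact key2 _ hA
  refine ⟨fun t => ![φ t 0 - u₁ t, φ t 1 - u₂ t], ?_, ?_⟩
  · intro t _
    rw [hasDerivWithinAt_univ]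
    refine hasDerivAt_pi.2 (Fin.forall_fin_two.2 ⟨?_, ?_⟩)
    · have hx0 : HasDerivAt (fun s => φ s 0 - u₁ s)
          (φd t 0 - (l * u₁ t + (u₂ t + f₁ t))) t := (hdi t 0).sub (hu₁ t)
      refine hx0.congr_deriv ?_
      symm
      simp [Matrix.mulVec, dotProduct, Fin.sum_univ_two, hf₁]
      ring
    · have hx1 : HasDerivAt (fun s => φ s 1 - u₂ s)
          (φd t 1 - (l * u₂ t + f₂ t)) t := (hdi t 1).sub (hu₂ t)
      refine hx1.congr_deriv ?_
      symm
      simp [Matrix.mulVec, dotProduct, Fin.sum_univ_two, hf₂]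
      ring
  · intro t _
    have hnn : 0 ≤ (|l.re| + 1) / l.re ^ 2 * ε := by positivity
    refine (pi_norm_le_iff_of_nonneg hnn).2 (Fin.forall_fin_two.2 ⟨?_, ?_⟩)
    · have : (φ t - ![φ t 0 - u₁ t, φ t 1 - u₂ t]) 0 = u₁ t := by simp
      rw [this, ← hKe]
      exact hu₁b t
    · have : (φ t - ![φ t 0 - u₁ t, φ t 1 - u₂ t]) 1 = u₂ t := by simp
      rw [this]
      exact le_trans (hu₂b t) hKe2

private lemma lower (l : ℂ) (h : l.re ≠ 0) (K : ℝ)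
    (hK : UlamStable2C Set.univ (fun _ => !![l, 1; 0, l]) K) :
    (|l.re| + 1) / (l.re) ^ 2 ≤ K := by
  have hA : 0 < |l.re| := abs_pos.2 h
  set p : ℝ := (|l.re| + 1) / l.re ^ 2 with hp
  set q : ℝ := -(1 / l.re) with hq
  have hppos : 0 < p := by
    rw [hp, ← sq_abs]
    positivity
  set e : ℝ → ℂ := fun t => Complex.exp (Complex.I * l.im * t) with he
  have hed : ∀ t : ℝ, HasDerivAt e (Complex.I * l.im * e t) t := by
    intro t
    have h1 : HasDerivAt (fun s : ℝ => Complex.I * l.im * (s : ℂ)) (Complex.I * l.im) t := by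
      simpa using ((hasDerivAt_id t).ofReal_comp.const_mul (Complex.I * (l.im : ℂ)))
    simpa [he, mul_comm] using h1.cexp
  have henorm : ∀ t : ℝ, ‖e t‖ = 1 := by
    intro t
    rw [he]
    simp only
    rw [Complex.norm_exp]
    have : (Complex.I * l.im * t).re = 0 := by simp
    rw [this, Real.exp_zero]
  have hIb : Complex.I * l.im - l = -(l.re : ℂ) := by
    apply Complex.ext <;> simp
  set φ : ℝ → Fin 2 → ℂ := fun t => ![e t * p, e t * q] with hφ
  set φd : ℝ → Fin 2 → ℂ := fun t => (Complex.I * (l.im : ℂ)) • φ t with hφd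
  have hderiv : ∀ t ∈ Set.univ, HasDerivWithinAt φ (φd t) Set.univ t := by
    intro t _
    rw [hasDerivWithinAt_univ]
    refine hasDerivAt_pi.2 (Fin.forall_fin_two.2 ⟨?_, ?_⟩)
    · have := (hed t).mul_const (p : ℂ)
      refine this.congr_deriv ?_
      symm
      simp [hφd, hφ]
      ring
    · have := (hed t).mul_const (q : ℂ)
      refine this.congr_deriv ?_
      symm
      simp [hφd, hφ]
      ring
  have hφc : Continuous φ := continuous_iff_continuousAt.2 fun t =>
    (hasDerivWithinAt_univ.1 (hderiv t trivial)).continuousAt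
  have hcont : ContinuousOn φd Set.univ := (hφc.const_smul (Complex.I * (l.im : ℂ))).continuousOn
  have hbound : ∀ t ∈ Set.univ,
      ‖φd t - (!![l, 1; 0, l]).mulVec (φ t)‖ ≤ 1 := by
    intro t _
    refine (pi_norm_le_iff_of_nonneg zero_le_one).2 (Fin.forall_fin_two.2 ⟨?_, ?_⟩)
    · have hval : (φd t - (!![l, 1; 0, l]).mulVec (φ t)) 0
          = e t * ((-(l.re : ℂ)) * p - q) := by
        simp [hφ, hφd, Matrix.mulVec, dotProduct, Fin.sum_univ_two, ← hIb]
        ring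
      rw [hval, norm_mul, henorm, one_mul]
      have hcast : (-(l.re : ℂ)) * p - q = ((-l.re * p - q : ℝ) : ℂ) := by push_cast; ring
      rw [hcast, Complex.norm_real, Real.norm_eq_abs]
      have hreal : -l.re * p - q = -(|l.re| / l.re) := by
        rw [hp, hq, ← sq_abs]
        field_simp
        rw [show |l.re| ^ 3 = l.re ^ 2 * |l.re| by rw [← sq_abs]; ring, sq_abs]
        ring
      rw [hreal, abs_neg, abs_div, abs_abs, div_self (abs_ne_zero.2 h)]
    · have hval : (φd t - (!![l, 1; 0, l]).mulVec (φ t)) 1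
          = e t * ((-(l.re : ℂ)) * q) := by
        simp [hφ, hφd, Matrix.mulVec, dotProduct, Fin.sum_univ_two, ← hIb]
        ring
      rw [hval, norm_mul, henorm, one_mul]
      have hcast : (-(l.re : ℂ)) * q = ((-l.re * q : ℝ) : ℂ) := by push_cast; ring
      rw [hcast, Complex.norm_real, Real.norm_eq_abs]
      have hreal : -l.re * q = 1 := by
        rw [hq]
        field_simp
      rw [hreal]
      simp
  obtain ⟨x, hx1, hx2⟩ := hK.2 1 one_pos φ φd hderiv hcont hbound
  have hxd : ∀ t : ℝ, ∀ i, HasDerivAt (fun s => x s i) ((!![l, 1; 0, l]).mulVec (x t) i) t :=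
    fun t => hasDerivAt_pi.1 (hasDerivWithinAt_univ.1 (hx1 t trivial))
  have hxi_b : ∀ t : ℝ, ∀ i, ‖x t i‖ ≤ K * 1 + ‖φ t i‖ := by
    intro t i
    calc ‖x t i‖ ≤ ‖x t i - φ t i‖ + ‖φ t i‖ := by
          simpa using norm_add_le (x t i - φ t i) (φ t i)
      _ ≤ K * 1 + ‖φ t i‖ := by
          gcongr
          rw [← norm_neg]
          simp only [neg_sub]
          exact le_trans (norm_le_pi_norm (φ t - x t) i) (hx2 t trivial)
  have hφnorm : ∀ t : ℝ, ∀ i, ‖φ t i‖ ≤ max |p| |q| := by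
    intro t
    refine Fin.forall_fin_two.2 ⟨?_, ?_⟩
    · simp only [hφ, Matrix.cons_val_zero]
      rw [norm_mul, henorm, one_mul, Complex.norm_real, Real.norm_eq_abs]
      exact le_max_left _ _
    · simp only [hφ, Matrix.cons_val_one, Matrix.head_cons, Matrix.cons_val_zero]
      rw [norm_mul, henorm, one_mul, Complex.norm_real, Real.norm_eq_abs]
      exact le_max_right _ _
  have hx2z : ∀ t : ℝ, x t 1 = 0 := by
    apply solz h (y := fun s => x s 1)
    · intro t
      have := hxd t 1
      have hmv : (!![l, 1; 0, l]).mulVec (x t) 1 = l * x t 1 := by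
        simp [Matrix.mulVec, dotProduct, Fin.sum_univ_two]
      rwa [hmv] at this
    · intro t
      exact le_trans (hxi_b t 1) (add_le_add le_rfl (hφnorm t 1))
  have hx1z : ∀ t : ℝ, x t 0 = 0 := by
    apply solz h (y := fun s => x s 0)
    · intro t
      have := hxd t 0
      have hmv : (!![l, 1; 0, l]).mulVec (x t) 0 = l * x t 0 := by
        simp [Matrix.mulVec, dotProduct, Fin.sum_univ_two, hx2z t]
      rwa [hmv] at this
    · intro t
      exact le_trans (hxi_b t 0) (add_le_add le_rfl (hφnorm t 0))
  have hfinal := hx2 0 trivial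
  have hφ00 : (φ 0 - x 0) 0 = (p : ℂ) := by
    simp [hφ, hx1z 0, he]
  calc p = ‖(φ 0 - x 0) 0‖ := by
        rw [hφ00, Complex.norm_real, Real.norm_eq_abs, abs_of_pos hppos]
    _ ≤ ‖φ 0 - x 0‖ := norm_le_pi_norm _ 0
    _ ≤ K * 1 := hfinal
    _ = K := mul_one K

theorem statement14 (l : ℂ) (h : l.re ≠ 0) :
    UlamStable2C Set.univ (fun _ => !![l, 1; 0, l]) ((|l.re| + 1) / (l.re) ^ 2) ∧
    ∀ K : ℝ, UlamStable2C Set.univ (fun _ => !![l, 1; 0, l]) K →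
      (|l.re| + 1) / (l.re) ^ 2 ≤ K := by
  exact ⟨upper l h, fun K hK => lower l h K hK⟩
end
end
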